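/- arXiv:1008.3497 — 7 statements merged into one kernel-verified Lean document; each statement's English description precedes it below -/
import Mathlib

section
/- Let A be a C*-algebra and let a, b be positive elements of A. Then the following five conditions are equivalent: (i) a ∼_s b, i.e. there exists x ∈ A such that A_a = A_{x*x} and A_b = A_{xx*}; (ii) there exist positive elements a', b' ∈ A with A_a = A_{a'}, a' ∼ b' (Pedersen equivalence), and A_{b'} = A_b; (iii) there exists x ∈ A such that A_a = A_{x*x} and A_b = A_{xx*}; (iv) there exists a positive element b' ∈ A with a ∼ b' and A_{b'} = A_b; (v) there exists a positive element a' ∈ A with A_a = A_{a'} and a' ∼ b. -/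
open Filter Topology

noncomputable section

variable {A : Type*}

/-- The hereditary subalgebra `A_a`: the norm-closure of `{a * x * a : x ∈ A}`. -/
def herSub [NonUnitalCStarAlgebra A] (a : A) : Set A :=
  closure {y : A | ∃ x : A, y = a * x * a}

/-- The right ideal `E_a`: the norm-closure of `{a * x : x ∈ A}`. -/
def rightIdeal [NonUnitalCStarAlgebra A] (a : A) : Set A :=
  closure {y : A | ∃ x : A, y = a * x}

/-- Pedersen equivalence: `a = x* x` and `b = x x*` for some `x`. -/
def PedersenEquiv [NonUnitalCStarAlgebra A] (a b : A) : Prop :=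
  ∃ x : A, a = star x * x ∧ b = x * star x

/-- Blackadar equivalence `a ∼ₛ b`: there is `x ∈ A` with `A_a = A_{x*x}` and `A_b = A_{xx*}`. -/
def BlackadarEquiv [NonUnitalCStarAlgebra A] (a b : A) : Prop :=
  ∃ x : A, herSub a = herSub (star x * x) ∧ herSub b = herSub (x * star x)

/-- Blackadar subequivalence `a ≾ₛ b`: there is a positive `a' ∈ A_b` with `a ∼ₛ a'`. -/
def BlackadarLe [NonUnitalCStarAlgebra A] [PartialOrder A] (a b : A) : Prop :=
  ∃ a' : A, 0 ≤ a' ∧ a' ∈ herSub b ∧ BlackadarEquiv a a'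

/-- Cuntz subequivalence `a ≾ b`: there is a sequence `xₙ` with `‖xₙ* b xₙ - a‖ → 0`. -/
def CuntzLe [NonUnitalCStarAlgebra A] (a b : A) : Prop :=
  ∃ x : ℕ → A, Tendsto (fun n => ‖star (x n) * b * x n - a‖) atTop (𝓝 0)

/-- Cuntz equivalence `a ≈ b`. -/
def CuntzEquiv [NonUnitalCStarAlgebra A] (a b : A) : Prop :=
  CuntzLe a b ∧ CuntzLe b a

/-- Compact containment `a ⊂⊂ b`: there is a positive `e ∈ A_b` with `e * a = a`. -/
def CpctContained [NonUnitalCStarAlgebra A] [PartialOrder A] (a b : A) : Prop :=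
  ∃ e : A, 0 ≤ e ∧ e ∈ herSub b ∧ e * a = a



/-- `√t/(t+ε)` (made globally continuous via `|t|`). -/
def dfun (ε t : ℝ) : ℝ := Real.sqrt |t| / (|t| + ε)

/-- `(t/(t+ε))^3`, approximate-unit shape. -/
def gfun (ε t : ℝ) : ℝ := (t / (|t| + ε)) ^ 3

/-- `t^2/(t+ε)^2`, approximate-unit shape. -/
def e2fun (ε t : ℝ) : ℝ := t * |t| / (|t| + ε) ^ 2

variable {ε δ t : ℝ}

lemma abs_pos_add (hε : 0 < ε) (t : ℝ) : 0 < |t| + ε := by positivity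

lemma cont_dfun (hε : 0 < ε) : Continuous (dfun ε) := by
  apply Continuous.div (by fun_prop) (by fun_prop)
  exact fun t => (abs_pos_add hε t).ne'

lemma cont_gfun (hε : 0 < ε) : Continuous (gfun ε) := by
  apply Continuous.pow
  exact Continuous.div (by fun_prop) (by fun_prop) fun t => (abs_pos_add hε t).ne'

lemma cont_e2fun (hε : 0 < ε) : Continuous (e2fun ε) := by
  apply Continuous.div (by fun_prop) (by fun_prop)
  exact fun t => (pow_ne_zero 2 (abs_pos_add hε t).ne')

@[simp] lemma dfun_zero : dfun ε 0 = 0 := by simp [dfun]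
@[simp] lemma gfun_zero : gfun ε 0 = 0 := by simp [gfun]
@[simp] lemma e2fun_zero : e2fun ε 0 = 0 := by simp [e2fun]

lemma abs_gfun_le_one (hε : 0 < ε) (t : ℝ) : |gfun ε t| ≤ 1 := by
  have h1 : 0 < |t| + ε := abs_pos_add hε t
  have : |t / (|t| + ε)| ≤ 1 := by
    rw [abs_div, abs_of_pos h1, div_le_one h1]
    linarith [abs_nonneg t]
  rw [gfun, abs_pow]
  exact pow_le_one₀ (abs_nonneg _) this

lemma abs_e2fun_le_one (hε : 0 < ε) (t : ℝ) : |e2fun ε t| ≤ 1 := by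
  have h1 : 0 < |t| + ε := abs_pos_add hε t
  rw [e2fun, abs_div, abs_of_pos (by positivity : (0:ℝ) < (|t| + ε) ^ 2), div_le_one (by positivity)]
  have h2 : |t| * |t| ≤ (|t| + ε) ^ 2 := by nlinarith [abs_nonneg t]
  calc abs (t * |t|) = |t| * |t| := by rw [abs_mul, abs_abs]
    _ ≤ (|t| + ε) ^ 2 := h2

def m1fun (ε t : ℝ) : ℝ := t / (|t| + ε) ^ 2
def m2fun (ε t : ℝ) : ℝ := Real.sqrt |t| / (|t| + ε) ^ 2
def m3fun (ε t : ℝ) : ℝ := |t| * Real.sqrt |t| / (|t| + ε) ^ 3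
def m4fun (ε t : ℝ) : ℝ := t / (|t| + ε) ^ 3

variable {ε δ t : ℝ}

lemma est_g (hε : 0 < ε) (ht : 0 ≤ t) : t * (gfun ε t - 1) ^ 2 ≤ 3 * ε := by
  have habs : |t| = t := abs_of_nonneg ht
  rw [gfun, habs]
  have key : t * ((t/(t+ε))^3 - 1)^2 = t * ((t+ε)^3 - t^3)^2 / (t+ε)^6 := by
    field_simp; ring
  rw [key, div_le_iff₀ (by positivity)]
  have hA0 : (0:ℝ) ≤ (t+ε)^3 - t^3 := by
    have := pow_le_pow_left₀ ht (by linarith : t ≤ t + ε) 3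
    linarith
  have hA : (t+ε)^3 - t^3 ≤ 3*ε*(t+ε)^2 := by
    nlinarith [mul_nonneg (mul_nonneg ht hε.le) hε.le, mul_nonneg hε.le (mul_nonneg hε.le hε.le)]
  have h5 : ((t+ε)^3 - t^3)^2 ≤ (3*ε*(t+ε)^2)^2 := pow_le_pow_left₀ hA0 hA 2
  have h6 : t * ((t+ε)^3 - t^3)^2 ≤ t * (3*ε*(t+ε)^2)^2 := mul_le_mul_of_nonneg_left h5 ht
  have h4 : 4*(ε*t) ≤ (t+ε)^2 := by nlinarith [sq_nonneg (t-ε)]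
  have h7 : t * (3*ε*(t+ε)^2)^2 ≤ 3*ε*(t+ε)^6 := by
    nlinarith [mul_le_mul_of_nonneg_left h4 (by positivity : (0:ℝ) ≤ (9/4)*ε*(t+ε)^4),
      (by positivity : (0:ℝ) ≤ ε*(t+ε)^6)]
  linarith

lemma est_e2 (hε : 0 < ε) (ht : 0 ≤ t) : t * (e2fun ε t - 1) ^ 2 ≤ ε := by
  have habs : |t| = t := abs_of_nonneg ht
  rw [e2fun, habs]
  have key : t * (t*t/(t+ε)^2 - 1)^2 = t * ((t+ε)^2 - t^2)^2 / (t+ε)^4 := by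
    field_simp; ring
  rw [key, div_le_iff₀ (by positivity)]
  have hA0 : (0:ℝ) ≤ (t+ε)^2 - t^2 := by
    have := pow_le_pow_left₀ ht (by linarith : t ≤ t + ε) 2
    linarith
  have hA : (t+ε)^2 - t^2 ≤ 2*ε*(t+ε) := by nlinarith [mul_nonneg hε.le hε.le]
  have h5 : ((t+ε)^2 - t^2)^2 ≤ (2*ε*(t+ε))^2 := pow_le_pow_left₀ hA0 hA 2
  have h6 : t * ((t+ε)^2 - t^2)^2 ≤ t * (2*ε*(t+ε))^2 := mul_le_mul_of_nonneg_left h5 ht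
  have h4 : 4*(ε*t) ≤ (t+ε)^2 := by nlinarith [sq_nonneg (t-ε)]
  have h7 : t * (2*ε*(t+ε))^2 ≤ ε*(t+ε)^4 := by
    nlinarith [mul_le_mul_of_nonneg_left h4 (by positivity : (0:ℝ) ≤ ε*(t+ε)^2)]
  linarith

lemma est_e2_lin (hε : 0 < ε) (ht : 0 ≤ t) : |t * (e2fun ε t - 1)| ≤ 2 * ε := by
  have habs : |t| = t := abs_of_nonneg ht
  rw [e2fun, habs]
  have hA0 : (0:ℝ) ≤ (t+ε)^2 - t^2 := by
    have := pow_le_pow_left₀ ht (by linarith : t ≤ t + ε) 2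
    linarith
  have key : t * (t*t/(t+ε)^2 - 1) = -(t * ((t+ε)^2 - t^2) / (t+ε)^2) := by
    field_simp; ring
  rw [key, abs_neg, abs_of_nonneg (div_nonneg (mul_nonneg ht hA0) (by positivity)),
    div_le_iff₀ (by positivity)]
  nlinarith [mul_nonneg (mul_nonneg hε.le hε.le) hε.le, mul_nonneg (mul_nonneg hε.le hε.le) ht]

lemma est_g_lin (hε : 0 < ε) (ht : 0 ≤ t) : |t * (gfun ε t - 1)| ≤ 3 * ε := by
  have habs : |t| = t := abs_of_nonneg ht
  rw [gfun, habs]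
  have hA0 : (0:ℝ) ≤ (t+ε)^3 - t^3 := by
    have := pow_le_pow_left₀ ht (by linarith : t ≤ t + ε) 3
    linarith
  have key : t * ((t/(t+ε))^3 - 1) = -(t * ((t+ε)^3 - t^3) / (t+ε)^3) := by
    field_simp; ring
  rw [key, abs_neg, abs_of_nonneg (div_nonneg (mul_nonneg ht hA0) (by positivity)),
    div_le_iff₀ (by positivity)]
  nlinarith [mul_nonneg (mul_nonneg hε.le hε.le) hε.le, mul_nonneg (mul_nonneg hε.le hε.le) ht,
    mul_nonneg (mul_nonneg ht ht) hε.le, mul_nonneg (mul_nonneg ht hε.le) hε.le]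


lemma sqrt_sq_eq (u : ℝ) (hu : 0 ≤ u) : Real.sqrt (u^2) = u := Real.sqrt_sq hu

lemma exists_sq (ht : 0 ≤ t) : ∃ u : ℝ, 0 ≤ u ∧ t = u ^ 2 :=
  ⟨Real.sqrt t, Real.sqrt_nonneg t, (Real.sq_sqrt ht).symm⟩

lemma est_d_bound (hε : 0 < ε) (ht : 0 ≤ t) : |dfun ε t * t * dfun ε t| ≤ 1 := by
  obtain ⟨u, hu, rfl⟩ := exists_sq ht
  have habs : |u ^ 2| = u ^ 2 := abs_of_nonneg (by positivity)
  have key : dfun ε (u^2) * (u^2) * dfun ε (u^2) = u^2 * u^2 / (u^2 + ε) ^ 2 := by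
    rw [dfun, habs, sqrt_sq_eq u hu]
    field_simp
  rw [key, abs_of_nonneg (by positivity), div_le_one (by positivity)]
  nlinarith [sq_nonneg u, sq_nonneg ε, mul_nonneg (sq_nonneg u) hε.le]

lemma est_d_diff (hε : 0 < ε) (hδ : 0 < δ) (ht : 0 ≤ t) :
    |((dfun ε t - dfun δ t) * t) * t * ((dfun ε t - dfun δ t) * t)| ≤ (ε + δ) ^ 2 := by
  obtain ⟨u, hu, rfl⟩ := exists_sq ht
  have habs : |u ^ 2| = u ^ 2 := abs_of_nonneg (by positivity)
  set s := u ^ 2 with hs_def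
  have hs : 0 ≤ s := by positivity
  have key : ((dfun ε s - dfun δ s) * s) * s * ((dfun ε s - dfun δ s) * s)
      = s^4 * (δ - ε)^2 / ((s+ε)^2 * (s+δ)^2) := by
    rw [dfun, dfun, hs_def, habs, sqrt_sq_eq u hu, ← hs_def]
    field_simp
    ring
  rw [key, abs_of_nonneg (by positivity), div_le_iff₀ (by positivity)]
  have h1 : s * s ≤ (s+ε) * (s+δ) := by
    nlinarith [mul_nonneg hs hε.le, mul_nonneg hs hδ.le, mul_nonneg hε.le hδ.le]
  have h2 : (δ - ε)^2 ≤ (ε + δ)^2 := by nlinarith [mul_nonneg hε.le hδ.le]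
  have h3 : (s*s)*(s*s) ≤ ((s+ε)*(s+δ))*((s+ε)*(s+δ)) :=
    mul_le_mul h1 h1 (by positivity) (by positivity)
  calc s^4 * (δ-ε)^2 = ((s*s)*(s*s)) * (δ-ε)^2 := by ring
    _ ≤ (((s+ε)*(s+δ))*((s+ε)*(s+δ))) * (ε+δ)^2 :=
        mul_le_mul h3 h2 (sq_nonneg _) (by positivity)
    _ = (ε+δ)^2 * ((s+ε)^2 * (s+δ)^2) := by ring

lemma est_dsg (hε : 0 < ε) (hδ : 0 < δ) (ht : 0 ≤ t) :
    |dfun ε t * (Real.sqrt |t| * gfun δ t) - gfun δ t| ≤ ε / δ := by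
  obtain ⟨u, hu, rfl⟩ := exists_sq ht
  have habs : |u ^ 2| = u ^ 2 := abs_of_nonneg (by positivity)
  set s := u ^ 2 with hs_def
  have hs : 0 ≤ s := by positivity
  have key : dfun ε s * (Real.sqrt |s| * gfun δ s) - gfun δ s
      = -(s^3 * ε / ((s+δ)^3 * (s+ε))) := by
    rw [dfun, gfun, hs_def, habs, sqrt_sq_eq u hu, ← hs_def]
    field_simp
    ring
  rw [key, abs_neg, abs_of_nonneg (by positivity), div_le_div_iff₀ (by positivity) hδ]
  have q1 : s*s ≤ (s+δ)*(s+δ) := mul_le_mul (by linarith) (by linarith) hs (by positivity)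
  have q2 : s*δ ≤ (s+ε)*(s+δ) := mul_le_mul (by linarith) (by linarith) hδ.le (by positivity)
  have q3 : (s*s)*(s*δ) ≤ ((s+δ)*(s+δ))*((s+ε)*(s+δ)) :=
    mul_le_mul q1 q2 (by positivity) (by positivity)
  calc s^3 * ε * δ = ((s*s)*(s*δ)) * ε := by ring
    _ ≤ (((s+δ)*(s+δ))*((s+ε)*(s+δ))) * ε := mul_le_mul_of_nonneg_right q3 hε.le
    _ = ε * ((s+δ)^3 * (s+ε)) := by ring

lemma est_m1 (hε : 0 < ε) (ht : 0 ≤ t) : |t * m1fun ε t * t - t| ≤ 2 * ε := by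
  have habs : |t| = t := abs_of_nonneg ht
  have hA0 : (0:ℝ) ≤ (t+ε)^2 - t^2 := by
    have := pow_le_pow_left₀ ht (by linarith : t ≤ t + ε) 2
    linarith
  have key : t * m1fun ε t * t - t = -(t * ((t+ε)^2 - t^2) / (t+ε)^2) := by
    rw [m1fun, habs]; field_simp; ring
  rw [key, abs_neg, abs_of_nonneg (div_nonneg (mul_nonneg ht hA0) (by positivity)),
    div_le_iff₀ (by positivity)]
  nlinarith [mul_nonneg (mul_nonneg hε.le hε.le) hε.le, mul_nonneg (mul_nonneg hε.le hε.le) ht]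

lemma est_m2 (hε : 0 < ε) (ht : 0 ≤ t) :
    |t * m2fun ε t * t - Real.sqrt t| ≤ Real.sqrt ε := by
  obtain ⟨u, hu, rfl⟩ := exists_sq ht
  have habs : |u ^ 2| = u ^ 2 := abs_of_nonneg (by positivity)
  obtain ⟨v, hv, rfl⟩ := exists_sq hε.le
  have hv' : 0 < v := by
    rcases hv.lt_or_eq with h | h
    · exact h
    · exfalso; rw [← h] at hε; simp at hε
  rw [sqrt_sq_eq u hu, sqrt_sq_eq v hv]
  have hA0 : (0:ℝ) ≤ (u^2+v^2)^2 - (u^2)^2 := by nlinarith [sq_nonneg u, sq_nonneg v]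
  have key : u^2 * m2fun (v^2) (u^2) * u^2 - u
      = -(u * ((u^2+v^2)^2 - (u^2)^2) / (u^2+v^2)^2) := by
    rw [m2fun, habs, sqrt_sq_eq u hu]
    field_simp
    ring
  have hpos : (0:ℝ) < u^2 + v^2 := by nlinarith [sq_nonneg u]
  rw [key, abs_neg, abs_of_nonneg (div_nonneg (mul_nonneg hu hA0) (by positivity)),
    div_le_iff₀ (by positivity)]
  nlinarith [mul_nonneg hv (mul_nonneg (mul_nonneg hu hu) (sq_nonneg (u-v))),
    mul_nonneg hv (mul_nonneg (mul_nonneg hv hv) (sq_nonneg (u-v))),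
    pow_nonneg hv 5, mul_nonneg (mul_nonneg hv hv) (mul_nonneg (mul_nonneg hv hv) hv)]

lemma id_d_e2 (hε : 0 < ε) (ht : 0 ≤ t) : dfun ε t * t * dfun ε t = e2fun ε t := by
  obtain ⟨u, hu, rfl⟩ := exists_sq ht
  have habs : |u ^ 2| = u ^ 2 := abs_of_nonneg (by positivity)
  rw [dfun, e2fun, habs, sqrt_sq_eq u hu]
  have hne : u ^ 2 + ε ≠ 0 := by positivity
  field_simp

lemma id_m3 (hε : 0 < ε) (ht : 0 ≤ t) : t * m3fun ε t * t = Real.sqrt t * gfun ε t := by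
  obtain ⟨u, hu, rfl⟩ := exists_sq ht
  have habs : |u ^ 2| = u ^ 2 := abs_of_nonneg (by positivity)
  rw [m3fun, gfun, habs, sqrt_sq_eq u hu]
  have hne : u ^ 2 + ε ≠ 0 := by positivity
  field_simp

lemma id_m4 (hε : 0 < ε) (ht : 0 ≤ t) : t * m4fun ε t * t = gfun ε t := by
  have habs : |t| = t := abs_of_nonneg ht
  rw [m4fun, gfun, habs]
  have hne : t + ε ≠ 0 := by positivity
  field_simp

lemma sqrt_mul_sqrt_eq (ht : 0 ≤ t) : Real.sqrt |t| * Real.sqrt |t| = t := by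
  rw [abs_of_nonneg ht]; exact Real.mul_self_sqrt ht

lemma cont_m1fun (hε : 0 < ε) : Continuous (m1fun ε) := by
  apply Continuous.div (by fun_prop) (by fun_prop)
  exact fun t => pow_ne_zero 2 (abs_pos_add hε t).ne'

lemma cont_m2fun (hε : 0 < ε) : Continuous (m2fun ε) := by
  apply Continuous.div (Real.continuous_sqrt.comp continuous_abs) (by fun_prop)
  exact fun t => pow_ne_zero 2 (abs_pos_add hε t).ne'

lemma cont_m3fun (hε : 0 < ε) : Continuous (m3fun ε) := by
  apply Continuous.div (continuous_abs.mul (Real.continuous_sqrt.comp continuous_abs)) (by fun_prop)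
  exact fun t => pow_ne_zero 3 (abs_pos_add hε t).ne'

lemma cont_m4fun (hε : 0 < ε) : Continuous (m4fun ε) := by
  apply Continuous.div (by fun_prop) (by fun_prop)
  exact fun t => pow_ne_zero 3 (abs_pos_add hε t).ne'

@[simp] lemma m1fun_zero : m1fun ε 0 = 0 := by simp [m1fun]
@[simp] lemma m2fun_zero : m2fun ε 0 = 0 := by simp [m2fun]
@[simp] lemma m3fun_zero : m3fun ε 0 = 0 := by simp [m3fun]
@[simp] lemma m4fun_zero : m4fun ε 0 = 0 := by simp [m4fun]

section S3


set_option linter.unusedSectionVars false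

variable {A : Type*} [NonUnitalCStarAlgebra A] [PartialOrder A] [StarOrderedRing A]

lemma star_cfcn (f : ℝ → ℝ) (p : A) : star (cfcₙ f p) = cfcₙ f p :=
  (cfcₙ_predicate f p).star_eq

lemma cfcn_mul_id_mul {p : A} (hp : 0 ≤ p) (f g : ℝ → ℝ)
    (hf : Continuous f) (hf0 : f 0 = 0) (hg : Continuous g) (hg0 : g 0 = 0) :
    cfcₙ f p * p * cfcₙ g p = cfcₙ (fun t => f t * t * g t) p := by
  symm
  calc cfcₙ (fun t => f t * t * g t) p
      = cfcₙ (fun t => f t * t) p * cfcₙ g p :=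
        cfcₙ_mul _ g p ((hf.mul continuous_id).continuousOn) (by simp [hf0])
          hg.continuousOn hg0
    _ = cfcₙ f p * cfcₙ (fun t : ℝ => t) p * cfcₙ g p := by
        rw [cfcₙ_mul f (fun t : ℝ => t) p hf.continuousOn hf0 (continuous_id.continuousOn) rfl]
    _ = cfcₙ f p * p * cfcₙ g p := by rw [cfcₙ_id' ℝ p hp.isSelfAdjoint]

lemma cfcn_mul_id {p : A} (hp : 0 ≤ p) (f : ℝ → ℝ) (hf : Continuous f) (hf0 : f 0 = 0) :
    cfcₙ f p * p = cfcₙ (fun t => f t * t) p := by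
  symm
  calc cfcₙ (fun t => f t * t) p
      = cfcₙ f p * cfcₙ (fun t : ℝ => t) p :=
        cfcₙ_mul f (fun t : ℝ => t) p hf.continuousOn hf0 (continuous_id.continuousOn) rfl
    _ = cfcₙ f p * p := by rw [cfcₙ_id' ℝ p hp.isSelfAdjoint]

lemma cfcn_id_mul {p : A} (hp : 0 ≤ p) (f : ℝ → ℝ) (hf : Continuous f) (hf0 : f 0 = 0) :
    p * cfcₙ f p = cfcₙ (fun t => t * f t) p := by
  symm
  calc cfcₙ (fun t => t * f t) p
      = cfcₙ (fun t : ℝ => t) p * cfcₙ f p :=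
        cfcₙ_mul (fun t : ℝ => t) f p (continuous_id.continuousOn) rfl hf.continuousOn hf0
    _ = p * cfcₙ f p := by rw [cfcₙ_id' ℝ p hp.isSelfAdjoint]

lemma norm_cfcn_le_shape {p : A} (hp : 0 ≤ p) {f : ℝ → ℝ} {M : ℝ}
    (h : ∀ t, 0 ≤ t → |f t| ≤ M) : ‖cfcₙ f p‖ ≤ M :=
  norm_cfcₙ_le fun t ht => by
    rw [Real.norm_eq_abs]; exact h t (quasispectrum_nonneg_of_nonneg p hp t ht)

lemma cfcn_congr_nonneg {p : A} (hp : 0 ≤ p) {f g : ℝ → ℝ} (h : ∀ t, 0 ≤ t → f t = g t) :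
    cfcₙ f p = cfcₙ g p :=
  cfcₙ_congr fun t ht => h t (quasispectrum_nonneg_of_nonneg p hp t ht)

lemma norm_sq_eq (v : A) : ‖v‖ ^ 2 = ‖star v * v‖ := by
  rw [CStarRing.norm_star_mul_self, sq]

lemma norm_sq_eq' (v : A) : ‖v‖ ^ 2 = ‖v * star v‖ := by
  rw [CStarRing.norm_self_mul_star, sq]

/-- The fundamental expansion `(f(p)w - w)(f(p)w - w)* = (t(f(t)-1)²)(p)` for `p = w w*`. -/
lemma cfcn_mul_sub_self_normsq (w : A) (f : ℝ → ℝ) (hf : Continuous f) (hf0 : f 0 = 0) :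
    ‖cfcₙ f (w * star w) * w - w‖ ^ 2
      = ‖cfcₙ (fun t => t * (f t - 1) ^ 2) (w * star w)‖ := by
  set p := w * star w with hp_def
  have hp : 0 ≤ p := mul_star_self_nonneg w
  have e1 : cfcₙ f p * w * (star w * cfcₙ f p) = cfcₙ (fun t => f t * t * f t) p := by
    have h' : cfcₙ f p * w * (star w * cfcₙ f p) = cfcₙ f p * p * cfcₙ f p := by
      rw [hp_def]; noncomm_ring
    rw [h', cfcn_mul_id_mul hp f f hf hf0 hf hf0]
  have e2 : cfcₙ f p * w * star w = cfcₙ (fun t => f t * t) p := by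
    rw [mul_assoc, ← hp_def, cfcn_mul_id hp f hf hf0]
  have e3 : w * (star w * cfcₙ f p) = cfcₙ (fun t => t * f t) p := by
    rw [← mul_assoc, ← hp_def, cfcn_id_mul hp f hf hf0]
  have split : cfcₙ (fun t => t * (f t - 1) ^ 2) p
      = cfcₙ (fun t => f t * t * f t) p - cfcₙ (fun t => f t * t) p
        - cfcₙ (fun t => t * f t) p + p := by
    calc cfcₙ (fun t => t * (f t - 1) ^ 2) p
        = cfcₙ (fun t => (f t * t * f t - f t * t - t * f t) + t) p :=
          congrArg (cfcₙ · p) (funext fun t => by ring)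
      _ = cfcₙ (fun t => f t * t * f t - f t * t - t * f t) p + cfcₙ (fun t : ℝ => t) p :=
          cfcₙ_add (fun t => f t * t * f t - f t * t - t * f t) (fun t : ℝ => t) p
            (show Continuous (fun t => f t * t * f t - f t * t - t * f t) by fun_prop).continuousOn
            (by simp [hf0]) continuous_id.continuousOn rfl
      _ = (cfcₙ (fun t => f t * t * f t - f t * t) p - cfcₙ (fun t => t * f t) p)
            + cfcₙ (fun t : ℝ => t) p := by
          rw [cfcₙ_sub (fun t => f t * t * f t - f t * t) (fun t => t * f t) p
            (show Continuous (fun t => f t * t * f t - f t * t) by fun_prop).continuousOn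
            (by simp [hf0])
            (show Continuous (fun t => t * f t) by fun_prop).continuousOn (by simp [hf0])]
      _ = ((cfcₙ (fun t => f t * t * f t) p - cfcₙ (fun t => f t * t) p)
            - cfcₙ (fun t => t * f t) p) + cfcₙ (fun t : ℝ => t) p := by
          rw [cfcₙ_sub (fun t => f t * t * f t) (fun t => f t * t) p
            (show Continuous (fun t => f t * t * f t) by fun_prop).continuousOn (by simp [hf0])
            (show Continuous (fun t => f t * t) by fun_prop).continuousOn (by simp [hf0])]
      _ = cfcₙ (fun t => f t * t * f t) p - cfcₙ (fun t => f t * t) p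
            - cfcₙ (fun t => t * f t) p + p := by rw [cfcₙ_id' ℝ p hp.isSelfAdjoint]
  have h1 : (cfcₙ f p * w - w) * star (cfcₙ f p * w - w)
      = cfcₙ (fun t => t * (f t - 1) ^ 2) p := by
    rw [star_sub, star_mul, star_cfcn]
    have expand : (cfcₙ f p * w - w) * (star w * cfcₙ f p - star w)
        = cfcₙ f p * w * (star w * cfcₙ f p) - cfcₙ f p * w * star w
          - w * (star w * cfcₙ f p) + w * star w := by noncomm_ring
    rw [expand, e1, e2, e3, ← hp_def, split]
  rw [norm_sq_eq', h1]

end S3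

section S4
open Filter Topology


set_option linter.unusedSectionVars false

variable {A : Type*} [NonUnitalCStarAlgebra A] [PartialOrder A] [StarOrderedRing A]

def herSub' (a : A) : Set A := closure {y : A | ∃ x : A, y = a * x * a}
def rightIdeal' (a : A) : Set A := closure {y : A | ∃ x : A, y = a * x}

lemma mul_mem_rightIdeal (w u : A) : w * u ∈ rightIdeal' w := subset_closure ⟨u, rfl⟩

lemma rightIdeal_mul_mem {w y : A} (hy : y ∈ rightIdeal' w) (u : A) :
    y * u ∈ rightIdeal' w := by
  have h1 : y * u ∈ (fun z => z * u) '' closure {y : A | ∃ v, y = w * v} := ⟨y, hy, rfl⟩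
  have h2 := (image_closure_subset_closure_image (continuous_mul_right u)) h1
  refine closure_mono ?_ h2
  rintro - ⟨-, ⟨v, rfl⟩, rfl⟩
  exact ⟨v * u, mul_assoc w v u⟩

lemma rightIdeal_subset_of_mem {w y : A} (hy : y ∈ rightIdeal' w) :
    rightIdeal' y ⊆ rightIdeal' w :=
  closure_minimal (by rintro - ⟨u, rfl⟩; exact rightIdeal_mul_mem hy u) isClosed_closure

lemma herSub_subset_rightIdeal (c : A) : herSub' c ⊆ rightIdeal' c :=
  closure_mono (by rintro - ⟨x, rfl⟩; exact ⟨x * c, mul_assoc c x c⟩)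

lemma star_mem_herSub {c : A} (hc : IsSelfAdjoint c) {y : A} (hy : y ∈ herSub' c) :
    star y ∈ herSub' c := by
  have h1 : star y ∈ star '' closure {y : A | ∃ x, y = c * x * c} := ⟨y, hy, rfl⟩
  have h2 := (image_closure_subset_closure_image continuous_star) h1
  refine closure_mono ?_ h2
  rintro - ⟨-, ⟨x, rfl⟩, rfl⟩
  refine ⟨star x, ?_⟩
  rw [star_mul, star_mul, hc.star_eq, mul_assoc]

lemma tendsto_of_normsq_le {u : ℕ → A} {v : A} {B : ℕ → ℝ} (hB : ∀ n, ‖u n - v‖ ^ 2 ≤ B n)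
    (hB0 : Tendsto B atTop (𝓝 0)) : Tendsto u atTop (𝓝 v) := by
  rw [tendsto_iff_norm_sub_tendsto_zero]
  have hsq : Tendsto (fun n => Real.sqrt (B n)) atTop (𝓝 0) := by
    have := (Real.continuous_sqrt.tendsto 0).comp hB0
    simpa [Function.comp_def] using this
  refine squeeze_zero (fun n => norm_nonneg _) (fun n => ?_) hsq
  exact (Real.le_sqrt (norm_nonneg _) (le_trans (sq_nonneg _) (hB n))).mpr (hB n)

/-- absorption: if `bₙ` is bounded and `bₙ w → w` then `bₙ y → y` for all `y ∈ rightIdeal' w`. -/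
lemma absorb_limit {w : A} {b : ℕ → A} {C : ℝ} (hC : 0 ≤ C) (hb : ∀ n, ‖b n‖ ≤ C)
    (hbw : Tendsto (fun n => b n * w) atTop (𝓝 w)) {y : A} (hy : y ∈ rightIdeal' w) :
    Tendsto (fun n => b n * y) atTop (𝓝 y) := by
  rw [Metric.tendsto_atTop]
  intro ε hε
  obtain ⟨z, ⟨u, rfl⟩, hz⟩ := Metric.mem_closure_iff.mp hy (ε / (3 * (C + 1))) (by positivity)
  rw [Metric.tendsto_atTop] at hbw
  obtain ⟨N, hN⟩ := hbw (ε / (3 * (‖u‖ + 1))) (by positivity)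
  refine ⟨N, fun n hn => ?_⟩
  have h1 : dist (b n * y) y ≤ ‖b n * (y - w * u)‖ + ‖(b n * w - w) * u‖ + ‖w * u - y‖ := by
    rw [dist_eq_norm]
    calc ‖b n * y - y‖
        = ‖b n * (y - w * u) + (b n * w - w) * u + (w * u - y)‖ := by
          congr 1; noncomm_ring
      _ ≤ ‖b n * (y - w * u) + (b n * w - w) * u‖ + ‖w * u - y‖ := norm_add_le _ _
      _ ≤ ‖b n * (y - w * u)‖ + ‖(b n * w - w) * u‖ + ‖w * u - y‖ := by
          gcongr; exact norm_add_le _ _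
  have h2 : ‖b n * (y - w * u)‖ ≤ C * (ε / (3 * (C + 1))) := by
    calc ‖b n * (y - w * u)‖ ≤ ‖b n‖ * ‖y - w * u‖ := norm_mul_le _ _
      _ ≤ C * (ε / (3 * (C + 1))) := by
          apply mul_le_mul (hb n) _ (norm_nonneg _) hC
          rw [← dist_eq_norm]; exact hz.le
  have h3 : ‖(b n * w - w) * u‖ ≤ (ε / (3 * (‖u‖ + 1))) * ‖u‖ := by
    calc ‖(b n * w - w) * u‖ ≤ ‖b n * w - w‖ * ‖u‖ := norm_mul_le _ _
      _ ≤ (ε / (3 * (‖u‖ + 1))) * ‖u‖ := by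
          apply mul_le_mul_of_nonneg_right _ (norm_nonneg u)
          rw [← dist_eq_norm]; exact (hN n hn).le
  have h4 : ‖w * u - y‖ < ε / (3 * (C + 1)) := by
    rw [← dist_eq_norm, dist_comm]; exact hz
  have e2 : C * (ε / (3 * (C + 1))) ≤ ε / 3 := by
    rw [show C * (ε / (3 * (C + 1))) = C * ε / (3 * (C + 1)) by ring,
      div_le_div_iff₀ (by positivity) (by positivity)]
    nlinarith [hε.le, hC]
  have e3 : (ε / (3 * (‖u‖ + 1))) * ‖u‖ ≤ ε / 3 := by
    rw [show (ε / (3 * (‖u‖ + 1))) * ‖u‖ = ε * ‖u‖ / (3 * (‖u‖ + 1)) by ring,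
      div_le_div_iff₀ (by positivity) (by positivity)]
    nlinarith [hε.le, norm_nonneg u]
  have e4 : ε / (3 * (C + 1)) ≤ ε / 3 := by
    rw [div_le_div_iff₀ (by positivity) (by positivity)]
    nlinarith [hε.le, hC]
  linarith

end S4

open Filter Topology
-- depends on s2 (scalar), s3 (cfc), s4 (topology); compiled concatenated
noncomputable section
namespace BlackadarWork

def εs (n : ℕ) : ℝ := 1 / (n + 1)

lemma εs_pos (n : ℕ) : 0 < εs n := by unfold εs; positivity

lemma εs_tendsto : Filter.Tendsto εs Filter.atTop (nhds 0) :=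
  tendsto_one_div_add_atTop_nhds_zero_nat

end BlackadarWork

open BlackadarWork Filter Topology

section CstarStuff

set_option linter.unusedSectionVars false

variable {A : Type*} [NonUnitalCStarAlgebra A] [PartialOrder A] [StarOrderedRing A]

lemma cfcn_id_mul_id {p : A} (hp : 0 ≤ p) (m : ℝ → ℝ) (hm : Continuous m) (hm0 : m 0 = 0) :
    p * cfcₙ m p * p = cfcₙ (fun t => t * m t * t) p := by
  rw [cfcn_id_mul hp m hm hm0,
    cfcn_mul_id hp (fun t => t * m t) (continuous_id.mul hm) (by simp)]

lemma cfcn_sub_id {p : A} (hp : 0 ≤ p) (F : ℝ → ℝ) (hF : Continuous F) (hF0 : F 0 = 0) :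
    cfcₙ F p - p = cfcₙ (fun t => F t - t) p := by
  symm
  calc cfcₙ (fun t => F t - t) p
      = cfcₙ F p - cfcₙ (fun t : ℝ => t) p :=
        cfcₙ_sub F (fun t : ℝ => t) p hF.continuousOn hF0 continuous_id.continuousOn rfl
    _ = cfcₙ F p - p := by rw [cfcₙ_id' ℝ p hp.isSelfAdjoint]

lemma cfcn_sub_cfcn {p : A} (hp : 0 ≤ p) (F G : ℝ → ℝ) (hF : Continuous F) (hF0 : F 0 = 0)
    (hG : Continuous G) (hG0 : G 0 = 0) :
    cfcₙ F p - cfcₙ G p = cfcₙ (fun t => F t - G t) p :=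
  (cfcₙ_sub F G p hF.continuousOn hF0 hG.continuousOn hG0).symm

lemma norm_cfcn_g_le_one {p : A} (hp : 0 ≤ p) {ε : ℝ} (hε : 0 < ε) :
    ‖cfcₙ (gfun ε) p‖ ≤ 1 :=
  norm_cfcn_le_shape hp fun t _ => abs_gfun_le_one hε t

lemma norm_cfcn_e2_le_one {p : A} (hp : 0 ≤ p) {ε : ℝ} (hε : 0 < ε) :
    ‖cfcₙ (e2fun ε) p‖ ≤ 1 :=
  norm_cfcn_le_shape hp fun t _ => abs_e2fun_le_one hε t

lemma tendsto_g_mul_w (w : A) :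
    Tendsto (fun n => cfcₙ (gfun (εs n)) (w * star w) * w) atTop (𝓝 w) := by
  refine tendsto_of_normsq_le (B := fun n => 3 * εs n) (fun n => ?_) ?_
  · rw [cfcn_mul_sub_self_normsq w _ (cont_gfun (εs_pos n)) gfun_zero]
    refine norm_cfcn_le_shape (mul_star_self_nonneg w) fun t ht => ?_
    rw [abs_of_nonneg (by positivity)]
    exact est_g (εs_pos n) ht
  · simpa using εs_tendsto.const_mul 3

lemma tendsto_e2_mul_w (w : A) :
    Tendsto (fun n => cfcₙ (e2fun (εs n)) (w * star w) * w) atTop (𝓝 w) := by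
  refine tendsto_of_normsq_le (B := εs) (fun n => ?_) εs_tendsto
  · rw [cfcn_mul_sub_self_normsq w _ (cont_e2fun (εs_pos n)) e2fun_zero]
    refine norm_cfcn_le_shape (mul_star_self_nonneg w) fun t ht => ?_
    rw [abs_of_nonneg (by positivity)]
    exact est_e2 (εs_pos n) ht

lemma tendsto_g_mul_y {w y : A} (hy : y ∈ rightIdeal' w) :
    Tendsto (fun n => cfcₙ (gfun (εs n)) (w * star w) * y) atTop (𝓝 y) :=
  absorb_limit zero_le_one
    (fun n => norm_cfcn_g_le_one (mul_star_self_nonneg w) (εs_pos n))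
    (tendsto_g_mul_w w) hy

lemma tendsto_e2_mul_y {w y : A} (hy : y ∈ rightIdeal' w) :
    Tendsto (fun n => cfcₙ (e2fun (εs n)) (w * star w) * y) atTop (𝓝 y) :=
  absorb_limit zero_le_one
    (fun n => norm_cfcn_e2_le_one (mul_star_self_nonneg w) (εs_pos n))
    (tendsto_e2_mul_w w) hy

lemma tendsto_mul_g_y {w y : A} (hy : star y ∈ rightIdeal' w) :
    Tendsto (fun n => y * cfcₙ (gfun (εs n)) (w * star w)) atTop (𝓝 y) := by
  have h := (continuous_star.tendsto (star y)).comp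
    (tendsto_g_mul_y (w := w) (y := star y) hy)
  have heq : (star ∘ fun n => cfcₙ (gfun (εs n)) (w * star w) * star y)
      = fun n => y * cfcₙ (gfun (εs n)) (w * star w) := by
    funext n
    simp only [Function.comp_apply, star_mul, star_star, star_cfcn]
  rw [heq] at h
  simpa [star_star] using h

lemma cfcn_g_eq_mul {p : A} (hp : 0 ≤ p) {ε : ℝ} (hε : 0 < ε) :
    cfcₙ (gfun ε) p = p * cfcₙ (m4fun ε) p * p := by
  rw [cfcn_id_mul_id hp (m4fun ε) (cont_m4fun hε) m4fun_zero]
  exact cfcn_congr_nonneg hp fun t ht => (id_m4 hε ht).symm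

lemma cfcn_g_conj_mem {p : A} (hp : 0 ≤ p) {ε : ℝ} (hε : 0 < ε) (y : A) :
    cfcₙ (gfun ε) p * y * cfcₙ (gfun ε) p ∈ {z : A | ∃ x, z = p * x * p} := by
  refine ⟨cfcₙ (m4fun ε) p * p * y * p * cfcₙ (m4fun ε) p, ?_⟩
  rw [cfcn_g_eq_mul hp hε]
  noncomm_ring

/-- Hereditary subalgebra of `w w*` equals `R_w ∩ R_w^*`. -/
lemma herSub_mul_star (w : A) :
    herSub' (w * star w) = rightIdeal' w ∩ {y | star y ∈ rightIdeal' w} := by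
  have hp : 0 ≤ w * star w := mul_star_self_nonneg w
  apply Set.Subset.antisymm
  · have hclosed : IsClosed (rightIdeal' w ∩ {y : A | star y ∈ rightIdeal' w}) :=
      isClosed_closure.inter (isClosed_closure.preimage continuous_star)
    apply closure_minimal _ hclosed
    rintro - ⟨x, rfl⟩
    constructor
    · exact subset_closure ⟨star w * x * (w * star w), by noncomm_ring⟩
    · refine subset_closure ⟨star w * star x * (w * star w), ?_⟩
      simp only [star_mul, star_star]
      noncomm_ring
  · rintro y ⟨hy1, hy2⟩
    set G : ℕ → A := fun n => cfcₙ (gfun (εs n)) (w * star w) with hG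
    have t1 : Tendsto (fun n => G n * y) atTop (𝓝 y) := tendsto_g_mul_y hy1
    have t2 : Tendsto (fun n => y * G n) atTop (𝓝 y) := tendsto_mul_g_y hy2
    have t3 : Tendsto (fun n => G n * y * G n) atTop (𝓝 y) := by
      rw [tendsto_iff_norm_sub_tendsto_zero]
      have hb : ∀ n, ‖G n * y * G n - y‖ ≤ ‖y * G n - y‖ + ‖G n * y - y‖ := by
        intro n
        have hGn : ‖G n‖ ≤ 1 := norm_cfcn_g_le_one hp (εs_pos n)
        calc ‖G n * y * G n - y‖ = ‖G n * (y * G n - y) + (G n * y - y)‖ := by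
              congr 1; noncomm_ring
          _ ≤ ‖G n * (y * G n - y)‖ + ‖G n * y - y‖ := norm_add_le _ _
          _ ≤ ‖G n‖ * ‖y * G n - y‖ + ‖G n * y - y‖ := by
              gcongr; exact norm_mul_le _ _
          _ ≤ 1 * ‖y * G n - y‖ + ‖G n * y - y‖ := by
              gcongr
          _ = ‖y * G n - y‖ + ‖G n * y - y‖ := by rw [one_mul]
      have hsum : Tendsto (fun n => ‖y * G n - y‖ + ‖G n * y - y‖) atTop (𝓝 0) := by
        have := (tendsto_iff_norm_sub_tendsto_zero.mp t2).add
          (tendsto_iff_norm_sub_tendsto_zero.mp t1)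
        simpa using this
      exact squeeze_zero (fun n => norm_nonneg _) hb hsum
    exact mem_closure_of_tendsto t3
      (Filter.Eventually.of_forall fun n => cfcn_g_conj_mem hp (εs_pos n) y)

lemma self_mem_herSub {a : A} (ha : 0 ≤ a) : a ∈ herSub' a := by
  have key : ∀ n, ‖a * cfcₙ (m1fun (εs n)) a * a - a‖ ≤ 2 * εs n := by
    intro n
    rw [cfcn_id_mul_id ha (m1fun (εs n)) (cont_m1fun (εs_pos n)) m1fun_zero,
      cfcn_sub_id ha _ (by exact (continuous_id.mul (cont_m1fun (εs_pos n))).mul continuous_id)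
        (by simp)]
    exact norm_cfcn_le_shape ha fun t ht => est_m1 (εs_pos n) ht
  have t : Tendsto (fun n => a * cfcₙ (m1fun (εs n)) a * a) atTop (𝓝 a) := by
    rw [tendsto_iff_norm_sub_tendsto_zero]
    refine squeeze_zero (fun n => norm_nonneg _) key ?_
    simpa using εs_tendsto.const_mul 2
  exact mem_closure_of_tendsto t
    (Filter.Eventually.of_forall fun n => ⟨cfcₙ (m1fun (εs n)) a, rfl⟩)

def sqfun : ℝ → ℝ := fun t => Real.sqrt |t|

lemma cont_sqfun : Continuous sqfun := Real.continuous_sqrt.comp continuous_abs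

@[simp] lemma sqfun_zero : sqfun 0 = 0 := by simp [sqfun]

lemma sqfun_mul_sqfun {a : A} (ha : 0 ≤ a) : cfcₙ sqfun a * cfcₙ sqfun a = a := by
  rw [← cfcₙ_mul sqfun sqfun a cont_sqfun.continuousOn sqfun_zero
    cont_sqfun.continuousOn sqfun_zero]
  calc cfcₙ (fun t => sqfun t * sqfun t) a = cfcₙ (fun t : ℝ => t) a :=
        cfcn_congr_nonneg ha fun t ht => sqrt_mul_sqrt_eq ht
    _ = a := cfcₙ_id' ℝ a ha.isSelfAdjoint

lemma sqrt_mem_herSub {a : A} (ha : 0 ≤ a) : cfcₙ sqfun a ∈ herSub' a := by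
  have key : ∀ n, ‖a * cfcₙ (m2fun (εs n)) a * a - cfcₙ sqfun a‖ ≤ Real.sqrt (εs n) := by
    intro n
    rw [cfcn_id_mul_id ha (m2fun (εs n)) (cont_m2fun (εs_pos n)) m2fun_zero,
      cfcn_sub_cfcn ha _ sqfun
        (by exact (continuous_id.mul (cont_m2fun (εs_pos n))).mul continuous_id) (by simp)
        cont_sqfun sqfun_zero]
    refine norm_cfcn_le_shape ha fun t ht => ?_
    have := est_m2 (εs_pos n) ht
    simpa [sqfun, abs_of_nonneg ht] using this
  have t : Tendsto (fun n => a * cfcₙ (m2fun (εs n)) a * a) atTop (𝓝 (cfcₙ sqfun a)) := by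
    rw [tendsto_iff_norm_sub_tendsto_zero]
    refine squeeze_zero (fun n => norm_nonneg _) key ?_
    have := (Real.continuous_sqrt.tendsto 0).comp εs_tendsto
    simpa [Function.comp_def] using this
  exact mem_closure_of_tendsto t
    (Filter.Eventually.of_forall fun n => ⟨cfcₙ (m2fun (εs n)) a, rfl⟩)

end CstarStuff

section S6
open Filter Topology
set_option linter.unusedSectionVars false

variable {A : Type*} [NonUnitalCStarAlgebra A] [PartialOrder A] [StarOrderedRing A]

lemma norm_mul_cfcn_sq (x : A) (f : ℝ → ℝ) (hf : Continuous f) (hf0 : f 0 = 0) :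
    ‖x * cfcₙ f (star x * x)‖ ^ 2 = ‖cfcₙ (fun t => f t * t * f t) (star x * x)‖ := by
  have hc : 0 ≤ star x * x := star_mul_self_nonneg x
  rw [norm_sq_eq]
  congr 1
  calc star (x * cfcₙ f (star x * x)) * (x * cfcₙ f (star x * x))
      = cfcₙ f (star x * x) * (star x * x) * cfcₙ f (star x * x) := by
        rw [star_mul, star_cfcn]; noncomm_ring
    _ = cfcₙ (fun t => f t * t * f t) (star x * x) := cfcn_mul_id_mul hc f f hf hf0 hf hf0

lemma limit_mem_rightIdeal {s : ℕ → A} {zz hh k L : A} (hs : ∀ n, ‖s n‖ ≤ 1)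
    (hz : Filter.Tendsto (fun n => s n * hh) Filter.atTop (𝓝 zz)) (hk : k ∈ rightIdeal' hh)
    (hL : Filter.Tendsto (fun n => s n * k) Filter.atTop (𝓝 L)) : L ∈ rightIdeal' zz := by
  rw [rightIdeal', Metric.mem_closure_iff]
  intro η hη
  obtain ⟨b, ⟨u, rfl⟩, hb⟩ := Metric.mem_closure_iff.mp hk (η / 3) (by positivity)
  have hzu : Filter.Tendsto (fun n => s n * (hh * u)) Filter.atTop (𝓝 (zz * u)) := by
    have := hz.mul (tendsto_const_nhds (x := u))
    simpa [mul_assoc] using this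
  obtain ⟨N1, hN1⟩ := Metric.tendsto_atTop.mp hL (η / 3) (by positivity)
  obtain ⟨N2, hN2⟩ := Metric.tendsto_atTop.mp hzu (η / 3) (by positivity)
  refine ⟨zz * u, ⟨u, rfl⟩, ?_⟩
  set n := max N1 N2
  have d1 : dist L (s n * k) < η / 3 := by
    rw [dist_comm]; exact hN1 n (le_max_left _ _)
  have d2 : dist (s n * k) (s n * (hh * u)) ≤ η / 3 := by
    rw [dist_eq_norm]
    calc ‖s n * k - s n * (hh * u)‖ = ‖s n * (k - hh * u)‖ := by rw [mul_sub]
      _ ≤ ‖s n‖ * ‖k - hh * u‖ := norm_mul_le _ _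
      _ ≤ 1 * ‖k - hh * u‖ := by
          gcongr; exact hs n
      _ ≤ η / 3 := by
          rw [one_mul, ← dist_eq_norm]; exact hb.le
  have d3 : dist (s n * (hh * u)) (zz * u) < η / 3 := hN2 n (le_max_right _ _)
  calc dist L (zz * u) ≤ dist L (s n * k) + dist (s n * k) (s n * (hh * u))
        + dist (s n * (hh * u)) (zz * u) := dist_triangle4 _ _ _ _
    _ < η := by linarith

/-- **Key lemma**: if `herSub a = herSub (x* x)` then `a` is Pedersen equivalent to an
element generating the same hereditary subalgebra as `x x*`. -/
lemma key_lemma (x a : A) (ha : 0 ≤ a) (hher : herSub' a = herSub' (star x * x)) :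
    ∃ z : A, star z * z = a ∧ herSub' (z * star z) = herSub' (x * star x) := by
  have hc : 0 ≤ star x * x := star_mul_self_nonneg x
  set h := cfcₙ sqfun a with hh_def
  have hhh : h * h = a := sqfun_mul_sqfun ha
  have hstar_h : star h = h := star_cfcn _ _
  have hmem_h : h ∈ rightIdeal' (star x * x) := by
    have h1 : h ∈ herSub' a := sqrt_mem_herSub ha
    rw [hher] at h1
    exact herSub_subset_rightIdeal _ h1
  -- the approximating sequence
  set s : ℕ → A := fun n => x * cfcₙ (dfun (εs n)) (star x * x) with hs_def
  -- (N1) uniform bound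
  have hs_bd : ∀ n, ‖s n‖ ≤ 1 := by
    intro n
    have h1 : ‖s n‖ ^ 2 ≤ 1 := by
      rw [hs_def, norm_mul_cfcn_sq x _ (cont_dfun (εs_pos n)) dfun_zero]
      exact norm_cfcn_le_shape hc fun t ht => est_d_bound (εs_pos n) ht
    nlinarith [norm_nonneg (s n)]
  -- (N2) difference bound
  have hs_diff : ∀ n m, ‖s n * (star x * x) - s m * (star x * x)‖ ≤ εs n + εs m := by
    intro n m
    have key : s n * (star x * x) - s m * (star x * x)
        = x * cfcₙ (fun t => dfun (εs n) t * t - dfun (εs m) t * t) (star x * x) := by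
      rw [hs_def]
      dsimp only
      rw [← cfcn_sub_cfcn hc (fun t => dfun (εs n) t * t) (fun t => dfun (εs m) t * t)
        ((cont_dfun (εs_pos n)).mul continuous_id') (by simp)
        ((cont_dfun (εs_pos m)).mul continuous_id') (by simp)]
      rw [← cfcn_mul_id hc (dfun (εs n)) (cont_dfun (εs_pos n)) dfun_zero,
        ← cfcn_mul_id hc (dfun (εs m)) (cont_dfun (εs_pos m)) dfun_zero]
      noncomm_ring
    have h2 : ‖x * cfcₙ (fun t => dfun (εs n) t * t - dfun (εs m) t * t) (star x * x)‖ ^ 2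
        ≤ (εs n + εs m) ^ 2 := by
      rw [norm_mul_cfcn_sq x _ (by
        exact ((cont_dfun (εs_pos n)).mul continuous_id).sub
          ((cont_dfun (εs_pos m)).mul continuous_id)) (by simp)]
      refine norm_cfcn_le_shape hc fun t ht => ?_
      have heq : (dfun (εs n) t * t - dfun (εs m) t * t) * t
          * (dfun (εs n) t * t - dfun (εs m) t * t)
          = ((dfun (εs n) t - dfun (εs m) t) * t) * t * ((dfun (εs n) t - dfun (εs m) t) * t) := by
        ring
      rw [heq]
      exact est_d_diff (εs_pos n) (εs_pos m) ht
    rw [key]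
    nlinarith [norm_nonneg (x * cfcₙ (fun t => dfun (εs n) t * t - dfun (εs m) t * t)
      (star x * x)), εs_pos n, εs_pos m]
  -- Cauchy sequence and its limit z
  have hcauchy : CauchySeq (fun n => s n * h) := by
    rw [Metric.cauchySeq_iff]
    intro η hη
    obtain ⟨b, ⟨u, rfl⟩, hb⟩ := Metric.mem_closure_iff.mp hmem_h (η / 4) (by positivity)
    obtain ⟨N, hN⟩ : ∃ N : ℕ, ∀ n ≥ N, εs n < η / (8 * (‖u‖ + 1)) := by
      obtain ⟨N, hN⟩ := Metric.tendsto_atTop.mp εs_tendsto (η / (8 * (‖u‖ + 1))) (by positivity)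
      exact ⟨N, fun n hn => by
        have := hN n hn
        rwa [Real.dist_eq, sub_zero, abs_of_pos (εs_pos n)] at this⟩
    refine ⟨N, fun m hm n hn => ?_⟩
    have expand : s m * h - s n * h
        = (s m - s n) * (h - star x * x * u) + (s m * (star x * x) - s n * (star x * x)) * u := by
      noncomm_ring
    have e1 : ‖(s m - s n) * (h - star x * x * u)‖ ≤ 2 * (η / 4) := by
      calc ‖(s m - s n) * (h - star x * x * u)‖
          ≤ ‖s m - s n‖ * ‖h - star x * x * u‖ := norm_mul_le _ _
        _ ≤ 2 * (η / 4) := by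
            apply mul_le_mul _ _ (norm_nonneg _) (by norm_num)
            · calc ‖s m - s n‖ ≤ ‖s m‖ + ‖s n‖ := norm_sub_le _ _
                _ ≤ 2 := by linarith [hs_bd m, hs_bd n]
            · rw [← dist_eq_norm]; exact hb.le
    have e2 : ‖(s m * (star x * x) - s n * (star x * x)) * u‖
        ≤ (εs m + εs n) * ‖u‖ := by
      calc ‖(s m * (star x * x) - s n * (star x * x)) * u‖
          ≤ ‖s m * (star x * x) - s n * (star x * x)‖ * ‖u‖ := norm_mul_le _ _
        _ ≤ (εs m + εs n) * ‖u‖ := mul_le_mul_of_nonneg_right (hs_diff m n) (norm_nonneg u)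
    have e3 : (εs m + εs n) * ‖u‖ < η / 4 := by
      have hm' := hN m hm
      have hn' := hN n hn
      calc (εs m + εs n) * ‖u‖ ≤ (εs m + εs n) * (‖u‖ + 1) := by
            apply mul_le_mul_of_nonneg_left (by linarith)
              (by linarith [εs_pos m, εs_pos n])
        _ < (η / (8 * (‖u‖ + 1)) + η / (8 * (‖u‖ + 1))) * (‖u‖ + 1) := by
            apply mul_lt_mul_of_pos_right (by linarith) (by positivity)
        _ = η / 4 := by field_simp; ring
    rw [dist_eq_norm, expand]
    calc ‖(s m - s n) * (h - star x * x * u)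
          + (s m * (star x * x) - s n * (star x * x)) * u‖
        ≤ ‖(s m - s n) * (h - star x * x * u)‖
          + ‖(s m * (star x * x) - s n * (star x * x)) * u‖ := norm_add_le _ _
      _ < η := by
          have := e2.trans_lt e3
          linarith
  obtain ⟨z, hz⟩ := cauchySeq_tendsto_of_complete hcauchy
  refine ⟨z, ?_, ?_⟩
  · -- star z * z = a
    have t1 : Filter.Tendsto (fun n => star (s n * h) * (s n * h)) Filter.atTop
        (𝓝 (star z * z)) := (hz.star).mul hz
    have t2 : ∀ n, star (s n * h) * (s n * h)
        = h * (cfcₙ (e2fun (εs n)) (star x * x) * h) := by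
      intro n
      rw [hs_def]
      simp only [star_mul, hstar_h, star_cfcn]
      have step1 : h * (cfcₙ (dfun (εs n)) (star x * x) * star x)
            * (x * cfcₙ (dfun (εs n)) (star x * x) * h)
          = h * (cfcₙ (dfun (εs n)) (star x * x) * (star x * x)
            * cfcₙ (dfun (εs n)) (star x * x)) * h := by noncomm_ring
      rw [step1, cfcn_mul_id_mul hc _ _ (cont_dfun (εs_pos n)) dfun_zero
        (cont_dfun (εs_pos n)) dfun_zero]
      rw [cfcn_congr_nonneg hc (fun t ht => id_d_e2 (εs_pos n) ht)]
      noncomm_ring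
    have hmem_h' : h ∈ rightIdeal' (star x) := by
      refine rightIdeal_subset_of_mem ?_ hmem_h
      exact subset_closure ⟨x, rfl⟩
    have t3 : Filter.Tendsto (fun n => cfcₙ (e2fun (εs n)) (star x * x) * h)
        Filter.atTop (𝓝 h) := by
      have h0 := tendsto_e2_mul_y (w := star x) (y := h) hmem_h'
      simpa [star_star] using h0
    have t4 : Filter.Tendsto (fun n => h * (cfcₙ (e2fun (εs n)) (star x * x) * h))
        Filter.atTop (𝓝 (h * h)) := tendsto_const_nhds.mul t3
    rw [hhh] at t4
    simp only [t2] at t1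
    exact tendsto_nhds_unique t1 t4
  · -- herSub (z z*) = herSub (x x*)
    have hP2 : z ∈ rightIdeal' x := by
      refine mem_closure_of_tendsto hz (Filter.Eventually.of_forall fun n => ?_)
      exact ⟨cfcₙ (dfun (εs n)) (star x * x) * h, by rw [hs_def, mul_assoc]⟩
    have hah : rightIdeal' a ⊆ rightIdeal' h :=
      rightIdeal_subset_of_mem (subset_closure ⟨h, hhh.symm⟩)
    -- the k_m elements
    have hk_mem : ∀ m : ℕ, cfcₙ (fun t => sqfun t * gfun (εs m) t) (star x * x)
        ∈ rightIdeal' h := by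
      intro m
      have h1 : cfcₙ (fun t => sqfun t * gfun (εs m) t) (star x * x)
          ∈ herSub' (star x * x) := by
        have heq : cfcₙ (fun t => sqfun t * gfun (εs m) t) (star x * x)
            = (star x * x) * cfcₙ (m3fun (εs m)) (star x * x) * (star x * x) := by
          rw [cfcn_id_mul_id hc (m3fun (εs m)) (cont_m3fun (εs_pos m)) m3fun_zero]
          refine cfcn_congr_nonneg hc fun t ht => ?_
          rw [id_m3 (εs_pos m) ht]
          simp [sqfun, abs_of_nonneg ht]
        rw [heq]
        exact subset_closure ⟨cfcₙ (m3fun (εs m)) (star x * x), rfl⟩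
      rw [← hher] at h1
      exact hah (herSub_subset_rightIdeal a h1)
    -- the limits s n * k m → x * g m
    have hlim : ∀ m : ℕ, Filter.Tendsto
        (fun n => s n * cfcₙ (fun t => sqfun t * gfun (εs m) t) (star x * x))
        Filter.atTop (𝓝 (x * cfcₙ (gfun (εs m)) (star x * x))) := by
      intro m
      rw [tendsto_iff_norm_sub_tendsto_zero]
      have hbound : ∀ n, ‖s n * cfcₙ (fun t => sqfun t * gfun (εs m) t) (star x * x)
          - x * cfcₙ (gfun (εs m)) (star x * x)‖ ≤ ‖x‖ * (εs n / εs m) := by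
        intro n
        have key : s n * cfcₙ (fun t => sqfun t * gfun (εs m) t) (star x * x)
            - x * cfcₙ (gfun (εs m)) (star x * x)
            = x * cfcₙ (fun t => dfun (εs n) t * (sqfun t * gfun (εs m) t)
                - gfun (εs m) t) (star x * x) := by
          rw [hs_def]
          dsimp only
          rw [mul_assoc x]
          rw [← cfcn_sub_cfcn hc
            (fun t => dfun (εs n) t * (sqfun t * gfun (εs m) t)) (gfun (εs m))
            ((cont_dfun (εs_pos n)).mul (cont_sqfun.mul (cont_gfun (εs_pos m)))) (by simp)
            (cont_gfun (εs_pos m)) gfun_zero]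
          rw [← cfcₙ_mul (dfun (εs n)) (fun t => sqfun t * gfun (εs m) t) (star x * x)
            (cont_dfun (εs_pos n)).continuousOn dfun_zero
            (cont_sqfun.mul (cont_gfun (εs_pos m))).continuousOn (by simp)]
          noncomm_ring
        rw [key]
        calc ‖x * cfcₙ (fun t => dfun (εs n) t * (sqfun t * gfun (εs m) t)
              - gfun (εs m) t) (star x * x)‖
            ≤ ‖x‖ * ‖cfcₙ (fun t => dfun (εs n) t * (sqfun t * gfun (εs m) t)
              - gfun (εs m) t) (star x * x)‖ := norm_mul_le _ _
          _ ≤ ‖x‖ * (εs n / εs m) := by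
              apply mul_le_mul_of_nonneg_left _ (norm_nonneg x)
              refine norm_cfcn_le_shape hc fun t ht => ?_
              simpa [sqfun] using est_dsg (εs_pos n) (εs_pos m) ht
      refine squeeze_zero (fun n => norm_nonneg _) hbound ?_
      have : Filter.Tendsto (fun n => ‖x‖ * (εs n / εs m)) Filter.atTop (𝓝 (‖x‖ * (0 / εs m))) := by
        exact (tendsto_const_nhds.mul (εs_tendsto.div_const (εs m)))
      simpa using this
    -- x g_m(c) → x
    have hxg : Filter.Tendsto (fun m => x * cfcₙ (gfun (εs m)) (star x * x))
        Filter.atTop (𝓝 x) := by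
      have h0 := tendsto_g_mul_w (star x)
      simp only [star_star] at h0
      have h1 := (continuous_star.tendsto (star x)).comp h0
      have heq : (star ∘ fun m => cfcₙ (gfun (εs m)) (star x * x) * star x)
          = fun m => x * cfcₙ (gfun (εs m)) (star x * x) := by
        funext m
        simp only [Function.comp_apply, star_mul, star_star, star_cfcn]
      rw [heq] at h1
      simpa [star_star] using h1
    have hP3 : x ∈ rightIdeal' z := by
      have hclosed : IsClosed (rightIdeal' z) := isClosed_closure
      refine hclosed.mem_of_tendsto hxg (Filter.Eventually.of_forall fun m => ?_)
      exact limit_mem_rightIdeal hs_bd hz (hk_mem m) (hlim m)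
    have hP4 : rightIdeal' z = rightIdeal' x :=
      Set.Subset.antisymm (rightIdeal_subset_of_mem hP2) (rightIdeal_subset_of_mem hP3)
    rw [herSub_mul_star z, herSub_mul_star x, hP4]

end S6

section Main
open Filter Topology

variable {A : Type*} [NonUnitalCStarAlgebra A] [PartialOrder A] [StarOrderedRing A]

lemma herSub_eq_herSub' (a : A) : herSub a = herSub' a := rfl

theorem blackadarEquiv_tfae' (a b : A) (ha : 0 ≤ a) (hb : 0 ≤ b) :
    List.TFAE
      [BlackadarEquiv a b,
       ∃ a' b' : A, 0 ≤ a' ∧ 0 ≤ b' ∧ herSub a = herSub a' ∧ PedersenEquiv a' b' ∧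
         herSub b' = herSub b,
       ∃ x : A, herSub a = herSub (star x * x) ∧ herSub b = herSub (x * star x),
       ∃ b' : A, 0 ≤ b' ∧ PedersenEquiv a b' ∧ herSub b' = herSub b,
       ∃ a' : A, 0 ≤ a' ∧ herSub a = herSub a' ∧ PedersenEquiv a' b] := by
  tfae_have 1 ↔ 3 := Iff.rfl
  tfae_have 3 → 2
  | ⟨x, h1, h2⟩ => ⟨star x * x, x * star x, star_mul_self_nonneg x, mul_star_self_nonneg x,
      h1, ⟨x, rfl, rfl⟩, h2.symm⟩
  tfae_have 2 → 3
  | ⟨a', b', _, _, h1, ⟨x, hx1, hx2⟩, h2⟩ => ⟨x, by rw [h1, hx1], by rw [← h2, hx2]⟩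
  tfae_have 4 → 2
  | ⟨b', hb', hped, h2⟩ => ⟨a, b', ha, hb', rfl, hped, h2⟩
  tfae_have 5 → 2
  | ⟨a', ha', h1, hped⟩ => ⟨a', b, ha', hb, h1, hped, rfl⟩
  tfae_have 2 → 4
  | ⟨a', b', ha', hb', h1, ⟨x, hx1, hx2⟩, h2⟩ => by
    obtain ⟨z, hz1, hz2⟩ := key_lemma x a ha (by
      rw [← herSub_eq_herSub', ← herSub_eq_herSub', h1, hx1])
    refine ⟨z * star z, mul_star_self_nonneg z, ⟨z, hz1.symm, rfl⟩, ?_⟩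
    rw [herSub_eq_herSub' (z * star z), hz2, ← herSub_eq_herSub', ← hx2, h2]
  tfae_have 2 → 5
  | ⟨a', b', ha', hb', h1, ⟨x, hx1, hx2⟩, h2⟩ => by
    obtain ⟨z, hz1, hz2⟩ := key_lemma (star x) b hb (by
      rw [← herSub_eq_herSub', ← herSub_eq_herSub', star_star, ← h2, hx2])
    refine ⟨z * star z, mul_star_self_nonneg z, ?_,
      ⟨star z, by rw [star_star], by rw [star_star]; exact hz1.symm⟩⟩
    have hsym : herSub (z * star z) = herSub a := by
      rw [herSub_eq_herSub', hz2, star_star, ← herSub_eq_herSub', ← hx1, ← h1]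
    exact hsym.symm
  tfae_finish

end Main

/-- the five characterizations of Blackadar equivalence are equivalent. -/
theorem blackadarEquiv_tfae [NonUnitalCStarAlgebra A] [PartialOrder A] [StarOrderedRing A]
    (a b : A) (ha : 0 ≤ a) (hb : 0 ≤ b) :
    List.TFAE
      [BlackadarEquiv a b,
       ∃ a' b' : A, 0 ≤ a' ∧ 0 ≤ b' ∧ herSub a = herSub a' ∧ PedersenEquiv a' b' ∧
         herSub b' = herSub b,
       ∃ x : A, herSub a = herSub (star x * x) ∧ herSub b = herSub (x * star x),
       ∃ b' : A, 0 ≤ b' ∧ PedersenEquiv a b' ∧ herSub b' = herSub b,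
       ∃ a' : A, 0 ≤ a' ∧ herSub a = herSub a' ∧ PedersenEquiv a' b] := by
  exact blackadarEquiv_tfae' a b ha hb
end
end
end

section
/- Let A be a C*-algebra. The Blackadar relation ∼_s is an equivalence relation on the set of positive elements of A: it is reflexive, symmetric, and transitive. -/
open Filter Topology

noncomputable section

variable {A : Type*}

section Aux

variable [NonUnitalCStarAlgebra A] [PartialOrder A] [StarOrderedRing A]

/-- Conjugation by `x`. -/
private def conjBy (x : A) : A → A := fun s => star x * s * x

omit [PartialOrder A] [StarOrderedRing A] in
private lemma conjBy_comp (x y : A) : conjBy x ∘ conjBy y = conjBy (y * x) := by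
  funext s
  simp only [conjBy, Function.comp_apply, star_mul]
  noncomm_ring

omit [PartialOrder A] [StarOrderedRing A] in
private lemma continuous_conjBy (x : A) : Continuous (conjBy x) := by
  unfold conjBy; fun_prop

omit [PartialOrder A] [StarOrderedRing A] in
private lemma closure_conjBy_closure (x : A) (S : Set A) :
    closure (conjBy x '' closure S) = closure (conjBy x '' S) := by
  refine Set.Subset.antisymm ?_ (closure_mono (Set.image_mono subset_closure))
  exact closure_minimal (image_closure_subset_closure_image (continuous_conjBy x))
    isClosed_closure

omit [PartialOrder A] [StarOrderedRing A] in
private lemma herSub_eq_closure_range (t : A) (ht : IsSelfAdjoint t) :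
    herSub t = closure (Set.range (conjBy t)) := by
  suffices hsuff : {y : A | ∃ x : A, y = t * x * t} = Set.range (conjBy t) by
    rw [herSub, hsuff]
  ext y
  simp only [Set.mem_setOf_eq, Set.mem_range]
  constructor
  · rintro ⟨x, rfl⟩
    exact ⟨x, by show star t * x * t = t * x * t; rw [ht.star_eq]⟩
  · rintro ⟨x, rfl⟩
    exact ⟨x, by show star t * x * t = t * x * t; rw [ht.star_eq]⟩

private lemma scalar_bound {c s : ℝ} (hc : 0 < c) (hs : 0 ≤ s) :
    s / (1 + (c * s) ^ 2) ^ 2 ≤ 1 / (2 * c) := by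
  rw [div_le_div_iff₀ (by positivity) (by positivity)]
  nlinarith [sq_nonneg (1 - c * s), mul_nonneg hc.le hs, sq_nonneg (c * s),
    mul_nonneg (mul_nonneg hc.le hs) (sq_nonneg (c * s))]

/-- An "approximate unit" cut from `t` by functional calculus. -/
private lemma approx_unit (t : A) (ht : 0 ≤ t) (n : ℕ) :
    ∃ E e : A, E = t * e ∧ E = e * t ∧ IsSelfAdjoint E ∧ ‖E‖ ≤ 1 ∧
      ‖t - t * E - E * t + E * (t * E)‖ ≤ 1 / (2 * (n + 1)) := by
  have hsa : IsSelfAdjoint t := IsSelfAdjoint.of_nonneg ht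
  set c : ℝ := n + 1 with hc
  have hcpos : (0 : ℝ) < c := by positivity
  set g : ℝ → ℝ := fun s => c ^ 2 * s / (1 + (c * s) ^ 2) with hg
  have hdpos : ∀ s : ℝ, (0 : ℝ) < 1 + (c * s) ^ 2 := fun s => by positivity
  have hgc : Continuous g := by
    apply Continuous.div (by fun_prop) (by fun_prop)
    exact fun s => (hdpos s).ne'
  have hg0 : g 0 = 0 := by simp [hg]
  set h : ℝ → ℝ := fun s => s * g s with hh
  have hhc : Continuous h := continuous_id.mul hgc
  have hh0 : h 0 = 0 := by simp [hh, hg0]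
  refine ⟨cfcₙ h t, cfcₙ g t, ?_, ?_, ?_, ?_, ?_⟩
  · have hm := cfcₙ_mul (fun s : ℝ => s) g t (continuous_id.continuousOn) rfl
      hgc.continuousOn hg0
    rw [cfcₙ_id' ℝ t] at hm
    exact hm.symm ▸ rfl
  · have hm := cfcₙ_mul g (fun s : ℝ => s) t hgc.continuousOn hg0
      (continuous_id.continuousOn) rfl
    rw [cfcₙ_id' ℝ t] at hm
    have hfun : (fun x : ℝ => g x * x) = h := by funext s; simp only [hh]; ring
    rw [hfun] at hm
    exact hm
  · exact cfcₙ_predicate h t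
  · refine norm_cfcₙ_le fun s _ => ?_
    have hd := hdpos s
    have hval : h s = c ^ 2 * s ^ 2 / (1 + (c * s) ^ 2) := by
      simp only [hh, hg]; field_simp
    rw [Real.norm_eq_abs, hval, abs_of_nonneg (by positivity), div_le_one hd]
    nlinarith [sq_nonneg (c * s)]
  · set E := cfcₙ h t with hE
    have h1 : t * E = cfcₙ (fun s => s * h s) t := by
      have hm := cfcₙ_mul (fun s : ℝ => s) h t (continuous_id.continuousOn) rfl
        hhc.continuousOn hh0
      rw [cfcₙ_id' ℝ t] at hm
      exact hm.symm
    have h2 : E * t = cfcₙ (fun s => h s * s) t := by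
      have hm := cfcₙ_mul h (fun s : ℝ => s) t hhc.continuousOn hh0
        (continuous_id.continuousOn) rfl
      rw [cfcₙ_id' ℝ t] at hm
      exact hm.symm
    have h3 : E * (t * E) = cfcₙ (fun s => h s * (s * h s)) t := by
      rw [h1, hE]
      exact (cfcₙ_mul h (fun s => s * h s) t hhc.continuousOn hh0
        ((continuous_id.mul hhc).continuousOn) (by simp [hh0])).symm
    have hA : cfcₙ (fun s => s - s * h s) t
        = cfcₙ (fun s : ℝ => s) t - cfcₙ (fun s => s * h s) t :=
      cfcₙ_sub _ _ t (continuous_id.continuousOn) rfl (by fun_prop) (by simp [hh0])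
    rw [cfcₙ_id' ℝ t, ← h1] at hA
    have hB : cfcₙ (fun s => s - s * h s - h s * s) t
        = cfcₙ (fun s => s - s * h s) t - cfcₙ (fun s => h s * s) t :=
      cfcₙ_sub _ _ t (by fun_prop) (by simp [hh0]) (by fun_prop) (by simp [hh0])
    rw [← h2] at hB
    have hC : cfcₙ (fun s => s - s * h s - h s * s + h s * (s * h s)) t
        = cfcₙ (fun s => s - s * h s - h s * s) t + cfcₙ (fun s => h s * (s * h s)) t :=
      cfcₙ_add _ _ t (by fun_prop) (by simp [hh0]) (by fun_prop) (by simp [hh0])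
    rw [← h3] at hC
    have h4 : t - t * E - E * t + E * (t * E)
        = cfcₙ (fun s => s - s * h s - h s * s + h s * (s * h s)) t := by
      rw [hC, hB, hA]
    rw [h4]
    refine norm_cfcₙ_le fun s hs => ?_
    have hs0 : 0 ≤ s := quasispectrum_nonneg_of_nonneg t ht s hs
    have hd := hdpos s
    have hval : s - s * h s - h s * s + h s * (s * h s) = s / (1 + (c * s) ^ 2) ^ 2 := by
      simp only [hh, hg]; field_simp; ring
    rw [Real.norm_eq_abs, hval, abs_of_nonneg (div_nonneg hs0 (by positivity))]
    calc s / (1 + (c * s) ^ 2) ^ 2 ≤ 1 / (2 * c) := scalar_bound hcpos hs0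
      _ = 1 / (2 * ((n : ℝ) + 1)) := by rw [hc]

/-- Key lemma: `w* v w` lies in the hereditary subalgebra of `w* w`. -/
private lemma conj_mem_herSub (w v : A) : star w * v * w ∈ herSub (star w * w) := by
  set t := star w * w with htdef
  have ht : 0 ≤ t := star_mul_self_nonneg w
  show star w * v * w ∈ closure {y : A | ∃ x : A, y = t * x * t}
  rw [Metric.mem_closure_iff]
  intro ε hε
  set M : ℝ := ‖v‖ * ‖w‖ + 1 with hM
  have hMpos : 0 < M := by positivity
  have hlim : Tendsto (fun n : ℕ => 2 * M * Real.sqrt (1 / (2 * (n + 1)))) atTop (𝓝 0) := by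
    have h1 : Tendsto (fun n : ℕ => 1 / (2 * ((n : ℝ) + 1))) atTop (𝓝 0) := by
      have h2 := tendsto_one_div_add_atTop_nhds_zero_nat.mul_const (1 / 2 : ℝ)
      rw [zero_mul] at h2
      exact Tendsto.congr
        (fun n => by rw [div_mul_div_comm, one_mul, mul_comm ((n : ℝ) + 1) 2]) h2
    have h2 : Tendsto (fun n : ℕ => Real.sqrt (1 / (2 * (n + 1)))) atTop (𝓝 (Real.sqrt 0)) :=
      (Real.continuous_sqrt.tendsto 0).comp h1
    rw [Real.sqrt_zero] at h2
    have h3 := h2.const_mul (2 * M)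
    simpa using h3
  obtain ⟨n, hn⟩ := (hlim.eventually (eventually_lt_nhds hε)).exists
  obtain ⟨E, e, hE1, hE2, hEsa, hEnorm, hEkey⟩ := approx_unit t ht n
  refine ⟨E * (star w * v * w) * E,
    ⟨e * (star w * v * w) * e, by nth_rewrite 1 [hE1]; rw [hE2]; noncomm_ring⟩, ?_⟩
  rw [dist_eq_norm]
  set δ : ℝ := ‖w - w * E‖ with hδ
  have hδ0 : 0 ≤ δ := norm_nonneg _
  have hδsq : δ ^ 2 ≤ 1 / (2 * (n + 1)) := by
    have hcs : δ ^ 2 = ‖star (w - w * E) * (w - w * E)‖ := by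
      rw [CStarRing.norm_star_mul_self, sq]
    have hexp : star (w - w * E) * (w - w * E) = t - t * E - E * t + E * (t * E) := by
      rw [star_sub, star_mul, hEsa.star_eq, htdef]
      noncomm_ring
    rw [hcs, hexp]
    exact hEkey
  have hδle : δ ≤ Real.sqrt (1 / (2 * (n + 1))) := Real.le_sqrt_of_sq_le hδsq
  have hstar : ‖star w - E * star w‖ = δ := by
    rw [show star w - E * star w = star (w - w * E) by
      rw [star_sub, star_mul, hEsa.star_eq], norm_star]
  have hsplit : star w * v * w - E * (star w * v * w) * E
      = (star w - E * star w) * (v * w) + E * star w * v * (w - w * E) := by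
    noncomm_ring
  have b1 : ‖(star w - E * star w) * (v * w)‖ ≤ δ * (‖v‖ * ‖w‖) := by
    calc ‖(star w - E * star w) * (v * w)‖ ≤ ‖star w - E * star w‖ * ‖v * w‖ :=
          norm_mul_le _ _
      _ = δ * ‖v * w‖ := by rw [hstar]
      _ ≤ δ * (‖v‖ * ‖w‖) := mul_le_mul_of_nonneg_left (norm_mul_le _ _) hδ0
  have b2 : ‖E * star w * v * (w - w * E)‖ ≤ ‖w‖ * ‖v‖ * δ := by
    calc ‖E * star w * v * (w - w * E)‖ ≤ ‖E * star w * v‖ * δ := norm_mul_le _ _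
      _ ≤ ‖E * star w‖ * ‖v‖ * δ :=
          mul_le_mul_of_nonneg_right (norm_mul_le _ _) hδ0
      _ ≤ ‖E‖ * ‖star w‖ * ‖v‖ * δ := by
          refine mul_le_mul_of_nonneg_right
            (mul_le_mul_of_nonneg_right (norm_mul_le _ _) (norm_nonneg _)) hδ0
      _ ≤ 1 * ‖star w‖ * ‖v‖ * δ := by
          refine mul_le_mul_of_nonneg_right (mul_le_mul_of_nonneg_right
            (mul_le_mul_of_nonneg_right hEnorm (norm_nonneg _)) (norm_nonneg _)) hδ0
      _ = ‖w‖ * ‖v‖ * δ := by rw [norm_star]; ring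
  calc ‖star w * v * w - E * (star w * v * w) * E‖
      = ‖(star w - E * star w) * (v * w) + E * star w * v * (w - w * E)‖ := by rw [hsplit]
    _ ≤ ‖(star w - E * star w) * (v * w)‖ + ‖E * star w * v * (w - w * E)‖ := norm_add_le _ _
    _ ≤ δ * (‖v‖ * ‖w‖) + ‖w‖ * ‖v‖ * δ := add_le_add b1 b2
    _ ≤ 2 * M * δ := by nlinarith [norm_nonneg v, norm_nonneg w]
    _ ≤ 2 * M * Real.sqrt (1 / (2 * (n + 1))) := by
        exact mul_le_mul_of_nonneg_left hδle (by positivity)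
    _ < ε := hn

/-- The hereditary subalgebra of `w* w` is the closed conjugation-image of `A` by `w`. -/
private lemma herSub_star_mul_self (w : A) :
    herSub (star w * w) = closure (Set.range (conjBy w)) := by
  apply Set.Subset.antisymm
  · refine closure_minimal ?_ isClosed_closure
    rintro y ⟨x, rfl⟩
    apply subset_closure
    refine ⟨w * x * star w, ?_⟩
    show star w * (w * x * star w) * w = star w * w * x * (star w * w)
    noncomm_ring
  · refine closure_minimal ?_ ?_
    · rintro y ⟨v, rfl⟩
      exact conj_mem_herSub w v
    · exact isClosed_closure

/-- Composition step: supports match up through `x` and `y`. -/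
private lemma herSub_comp (x y : A) (hxy : herSub (star y * y) = herSub (x * star x)) :
    herSub (star (y * x) * (y * x)) = herSub (star x * x) := by
  calc herSub (star (y * x) * (y * x))
      = closure (Set.range (conjBy (y * x))) := herSub_star_mul_self _
    _ = closure (Set.range (conjBy x ∘ conjBy y)) := by rw [conjBy_comp]
    _ = closure (conjBy x '' Set.range (conjBy y)) := by rw [Set.range_comp]
    _ = closure (conjBy x '' closure (Set.range (conjBy y))) :=
        (closure_conjBy_closure x _).symm
    _ = closure (conjBy x '' herSub (star y * y)) := by rw [← herSub_star_mul_self]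
    _ = closure (conjBy x '' herSub (x * star x)) := by rw [hxy]
    _ = closure (conjBy x '' herSub (star (star x) * star x)) := by rw [star_star]
    _ = closure (conjBy x '' closure (Set.range (conjBy (star x)))) := by
        rw [herSub_star_mul_self]
    _ = closure (conjBy x '' Set.range (conjBy (star x))) := closure_conjBy_closure x _
    _ = closure (Set.range (conjBy x ∘ conjBy (star x))) := by rw [Set.range_comp]
    _ = closure (Set.range (conjBy (star x * x))) := by rw [conjBy_comp]
    _ = herSub (star x * x) :=
        (herSub_eq_closure_range _ (IsSelfAdjoint.star_mul_self x)).symm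

private lemma herSub_star_self_eq (a : A) (ha : IsSelfAdjoint a) :
    herSub (star a * a) = herSub a := by
  rw [herSub_star_mul_self a, ← herSub_eq_closure_range a ha]

end Aux

/-- Blackadar equivalence is an equivalence relation on positive elements. -/
theorem blackadarEquiv_equivalence [NonUnitalCStarAlgebra A] [PartialOrder A]
    [StarOrderedRing A] :
    (∀ a : A, 0 ≤ a → BlackadarEquiv a a) ∧
    (∀ a b : A, 0 ≤ a → 0 ≤ b → BlackadarEquiv a b → BlackadarEquiv b a) ∧
    (∀ a b c : A, 0 ≤ a → 0 ≤ b → 0 ≤ c →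
      BlackadarEquiv a b → BlackadarEquiv b c → BlackadarEquiv a c) := by
  refine ⟨?_, ?_, ?_⟩
  · intro a ha
    have hsa : IsSelfAdjoint a := IsSelfAdjoint.of_nonneg ha
    refine ⟨a, (herSub_star_self_eq a hsa).symm, ?_⟩
    conv_lhs => rw [← herSub_star_self_eq a hsa]
    rw [hsa.star_eq]
  · rintro a b _ _ ⟨x, h1, h2⟩
    exact ⟨star x, by rwa [star_star], by rwa [star_star]⟩
  · rintro a b c _ _ _ ⟨x, ha1, ha2⟩ ⟨y, hb1, hb2⟩
    refine ⟨y * x, ?_, ?_⟩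
    · rw [herSub_comp x y (hb1.symm.trans ha2), ← ha1]
    · have key : herSub (star (star x * star y) * (star x * star y))
          = herSub (star (star y) * star y) := by
        apply herSub_comp (star y) (star x)
        rw [star_star, star_star]
        exact ha2.symm.trans hb1
      have h1 : (y * x) * star (y * x) = star (star x * star y) * (star x * star y) := by
        simp only [star_mul, star_star]
      rw [h1, key, star_star]
      exact hb2
end
end

section
/- Let A be a C*-algebra and let a, b be positive elements of A. Then a ∼_s b if and only if the Hilbert A-modules E_a and E_b are isometrically isomorphic, i.e. if and only if there exists a bijection Φ : E_a → E_b which is additive, right A-linear (Φ(x c) = Φ(x) c for all x ∈ E_a and c ∈ A), and satisfies Φ(x)* Φ(y) = x* y for all x, y ∈ E_a. -/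
open Filter Topology

noncomputable section

variable {A : Type*}

set_option linter.unusedSectionVars false
set_option linter.dupNamespace false
set_option maxHeartbeats 1000000
namespace BlackadarAux

lemma d_pos {t ε : ℝ} (ht : 0 ≤ t) (hε : 0 < ε) : 0 < t + ε := by linarith

lemma contD {ε : ℝ} (hε : 0 < ε) : Continuous (fun t : ℝ => (max t 0 + ε)⁻¹) := by
  refine ((continuous_id.max continuous_const).add continuous_const).inv₀ fun t => ?_
  have : (0:ℝ) ≤ max t 0 := le_max_right _ _
  exact (show (0:ℝ) < max t 0 + ε by linarith).ne'

lemma frac_le_one₁ {t ε : ℝ} (ht : 0 ≤ t) (hε : 0 < ε) : t * (t + ε)⁻¹ ≤ 1 := by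
  have hd : 0 < t + ε := d_pos ht hε
  have h := mul_le_mul_of_nonneg_right (show t ≤ t + ε by linarith) (inv_pos.mpr hd).le
  rwa [mul_inv_cancel₀ hd.ne'] at h

lemma frac_le_one₂ {t ε : ℝ} (ht : 0 ≤ t) (hε : 0 < ε) : ε * (t + ε)⁻¹ ≤ 1 := by
  have hd : 0 < t + ε := d_pos ht hε
  have h := mul_le_mul_of_nonneg_right (show ε ≤ t + ε by linarith) (inv_pos.mpr hd).le
  rwa [mul_inv_cancel₀ hd.ne'] at h

-- R1 : ‖s * g n‖ ≤ 1
lemma R1 {t ε : ℝ} (ht : 0 ≤ t) (hε : 0 < ε) :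
    |Real.sqrt t * (Real.sqrt t * (max t 0 + ε)⁻¹)| ≤ 1 := by
  rw [max_eq_left ht]
  have hd : 0 < t + ε := d_pos ht hε
  have hd0 : 0 ≤ (t + ε)⁻¹ := (inv_pos.mpr hd).le
  have hu : Real.sqrt t * Real.sqrt t = t := Real.mul_self_sqrt ht
  have hu0 : 0 ≤ Real.sqrt t := Real.sqrt_nonneg t
  rw [abs_of_nonneg (by positivity), ← mul_assoc, hu]
  exact frac_le_one₁ ht hε

-- R3 : |t * (t * d) - t| ≤ ε   (p * e n ≈ p)
lemma R3 {t ε : ℝ} (ht : 0 ≤ t) (hε : 0 < ε) :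
    |t * (t * (max t 0 + ε)⁻¹) - t| ≤ ε := by
  rw [max_eq_left ht]
  have hd : 0 < t + ε := d_pos ht hε
  have hd0 : 0 ≤ (t + ε)⁻¹ := (inv_pos.mpr hd).le
  have key : t * (t * (t + ε)⁻¹) - t = -(t * (ε * (t + ε)⁻¹)) := by
    field_simp; ring
  rw [key, abs_neg, abs_of_nonneg (mul_nonneg ht (mul_nonneg hε.le hd0))]
  calc t * (ε * (t + ε)⁻¹) = ε * (t * (t + ε)⁻¹) := by ring
    _ ≤ ε * 1 := mul_le_mul_of_nonneg_left (frac_le_one₁ ht hε) hε.le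
    _ = ε := mul_one ε

-- R2 : |√t * ((√t * d) * t) - √t * √t| ≤ ε    (s * (g n * p) ≈ s * s)
lemma R2 {t ε : ℝ} (ht : 0 ≤ t) (hε : 0 < ε) :
    |Real.sqrt t * (Real.sqrt t * (max t 0 + ε)⁻¹ * t) - Real.sqrt t * Real.sqrt t| ≤ ε := by
  set u := Real.sqrt t with hudef
  have hu : u * u = t := Real.mul_self_sqrt ht
  have h : u * (u * (max t 0 + ε)⁻¹ * t) = t * (t * (max t 0 + ε)⁻¹) := by
    rw [← hu]; ring
  rw [h, hu]
  exact R3 ht hε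

-- core sqrt bound :  √t * ε * d ≤ √ε
lemma sqrt_core {t ε : ℝ} (ht : 0 ≤ t) (hε : 0 < ε) :
    Real.sqrt t * ε * (t + ε)⁻¹ ≤ Real.sqrt ε := by
  have hd : 0 < t + ε := d_pos ht hε
  have hd0 : 0 ≤ (t + ε)⁻¹ := (inv_pos.mpr hd).le
  have hu : Real.sqrt t * Real.sqrt t = t := Real.mul_self_sqrt ht
  have hv : Real.sqrt ε * Real.sqrt ε = ε := Real.mul_self_sqrt hε.le
  have hu0 : 0 ≤ Real.sqrt t := Real.sqrt_nonneg t
  have hv0 : 0 < Real.sqrt ε := Real.sqrt_pos.mpr hε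
  rcases le_total t ε with h | h
  · have huv : Real.sqrt t ≤ Real.sqrt ε := Real.sqrt_le_sqrt h
    calc Real.sqrt t * ε * (t + ε)⁻¹ = Real.sqrt t * (ε * (t + ε)⁻¹) := by ring
      _ ≤ Real.sqrt ε * 1 := mul_le_mul huv (frac_le_one₂ ht hε) (by positivity) hv0.le
      _ = Real.sqrt ε := mul_one _
  · have huv : Real.sqrt ε ≤ Real.sqrt t := Real.sqrt_le_sqrt h
    rw [← sub_nonneg]
    have key : (Real.sqrt ε - Real.sqrt t * ε * (t + ε)⁻¹) * (t + ε)
        = Real.sqrt ε * t + Real.sqrt ε * ε - Real.sqrt t * ε := by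
      field_simp
    have h2 : 0 ≤ Real.sqrt ε * t + Real.sqrt ε * ε - Real.sqrt t * ε := by
      nlinarith [mul_nonneg hu0 hv0.le]
    nlinarith [hd]

-- R4 : |t * (√t * d) - √t| ≤ √ε     (p * g n ≈ s)
lemma R4 {t ε : ℝ} (ht : 0 ≤ t) (hε : 0 < ε) :
    |t * (Real.sqrt t * (max t 0 + ε)⁻¹) - Real.sqrt t| ≤ Real.sqrt ε := by
  rw [max_eq_left ht]
  have hd : 0 < t + ε := d_pos ht hε
  have hd0 : 0 ≤ (t + ε)⁻¹ := (inv_pos.mpr hd).le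
  have hu0 : 0 ≤ Real.sqrt t := Real.sqrt_nonneg t
  have key : t * (Real.sqrt t * (t + ε)⁻¹) - Real.sqrt t = -(Real.sqrt t * ε * (t + ε)⁻¹) := by
    field_simp; ring
  rw [key, abs_neg, abs_of_nonneg (by positivity)]
  exact sqrt_core ht hε

-- R5 : |√t * (√t * (√t * d)) - √t| ≤ √ε   (s * (s * g n) ≈ s)
lemma R5 {t ε : ℝ} (ht : 0 ≤ t) (hε : 0 < ε) :
    |Real.sqrt t * (Real.sqrt t * (Real.sqrt t * (max t 0 + ε)⁻¹)) - Real.sqrt t| ≤ Real.sqrt ε := by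
  set u := Real.sqrt t with hudef
  have hu : u * u = t := Real.mul_self_sqrt ht
  have h : u * (u * (u * (max t 0 + ε)⁻¹)) = t * (u * (max t 0 + ε)⁻¹) := by
    rw [← hu]; ring
  rw [h]
  exact R4 ht hε

-- R6a : |(√t*d) * (t * (√t*d))| ≤ 1      (‖w n‖ ≤ 1)
lemma R6a {t ε : ℝ} (ht : 0 ≤ t) (hε : 0 < ε) :
    |Real.sqrt t * (max t 0 + ε)⁻¹ * (t * (Real.sqrt t * (max t 0 + ε)⁻¹))| ≤ 1 := by
  rw [max_eq_left ht]
  have hd : 0 < t + ε := d_pos ht hε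
  have hd0 : 0 ≤ (t + ε)⁻¹ := (inv_pos.mpr hd).le
  set u := Real.sqrt t with hudef
  have hu : u * u = t := Real.mul_self_sqrt ht
  have hu0 : 0 ≤ u := Real.sqrt_nonneg t
  have h : u * (t + ε)⁻¹ * (t * (u * (t + ε)⁻¹)) = (t * (t + ε)⁻¹) * (t * (t + ε)⁻¹) := by
    rw [← hu]; ring
  rw [h, abs_of_nonneg (by positivity)]
  have htd : t * (t + ε)⁻¹ ≤ 1 := frac_le_one₁ ht hε
  have htd0 : 0 ≤ t * (t + ε)⁻¹ := mul_nonneg ht hd0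
  nlinarith

-- R6b : |((√t*d) * (t * (√t*d))) * t - t| ≤ 3 * ε    (w n * p ≈ p)
lemma R6b {t ε : ℝ} (ht : 0 ≤ t) (hε : 0 < ε) :
    |Real.sqrt t * (max t 0 + ε)⁻¹ * (t * (Real.sqrt t * (max t 0 + ε)⁻¹)) * t - t| ≤ 3 * ε := by
  rw [max_eq_left ht]
  have hd : 0 < t + ε := d_pos ht hε
  have hd0 : 0 ≤ (t + ε)⁻¹ := (inv_pos.mpr hd).le
  set u := Real.sqrt t with hudef
  have hu : u * u = t := Real.mul_self_sqrt ht
  have h : u * (t + ε)⁻¹ * (t * (u * (t + ε)⁻¹)) * t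
      = t * (t + ε)⁻¹ * (t * (t + ε)⁻¹) * t := by rw [← hu]; ring
  rw [h]
  have e1 : t * (t+ε)⁻¹ ≤ 1 := frac_le_one₁ ht hε
  have e2 : ε * (t+ε)⁻¹ ≤ 1 := frac_le_one₂ ht hε
  have e4 : 0 ≤ t * (t+ε)⁻¹ := mul_nonneg ht hd0
  have e5 : 0 ≤ ε * (t+ε)⁻¹ := mul_nonneg hε.le hd0
  have e3 : t * (t+ε)⁻¹ * (t * (t+ε)⁻¹) * t - t
      = -(2 * ((t * (t+ε)⁻¹) * (t * (t+ε)⁻¹)) * ε + (t * (t+ε)⁻¹) * ((ε * (t+ε)⁻¹) * ε)) := by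
    field_simp; ring
  rw [e3, abs_neg, abs_of_nonneg (by positivity)]
  have k1 := mul_le_mul_of_nonneg_right (mul_le_mul e1 e1 e4 zero_le_one) hε.le
  have k2 := mul_le_mul_of_nonneg_right (mul_le_mul e1 e2 e5 zero_le_one) hε.le
  have k3 : t * (t+ε)⁻¹ * (ε * (t+ε)⁻¹ * ε) = t * (t+ε)⁻¹ * (ε * (t+ε)⁻¹) * ε := by ring
  linarith



-- R7 : |t * (d * (t * d)) * t - t| ≤ 3 ε   (p * k n * p ≈ p)
lemma R7 {t ε : ℝ} (ht : 0 ≤ t) (hε : 0 < ε) :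
    |t * ((max t 0 + ε)⁻¹ * (t * (max t 0 + ε)⁻¹)) * t - t| ≤ 3 * ε := by
  rw [max_eq_left ht]
  have hd : 0 < t + ε := by linarith
  have hd0 : 0 ≤ (t + ε)⁻¹ := (inv_pos.mpr hd).le
  have e1 : t * (t+ε)⁻¹ ≤ 1 := by
    have h := mul_le_mul_of_nonneg_right (show t ≤ t + ε by linarith) hd0
    rwa [mul_inv_cancel₀ hd.ne'] at h
  have e2 : ε * (t+ε)⁻¹ ≤ 1 := by
    have h := mul_le_mul_of_nonneg_right (show ε ≤ t + ε by linarith) hd0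
    rwa [mul_inv_cancel₀ hd.ne'] at h
  have e4 : 0 ≤ t * (t+ε)⁻¹ := mul_nonneg ht hd0
  have e5 : 0 ≤ ε * (t+ε)⁻¹ := mul_nonneg hε.le hd0
  have e3 : t * ((t+ε)⁻¹ * (t * (t+ε)⁻¹)) * t - t
      = -(2 * ((t * (t+ε)⁻¹) * (t * (t+ε)⁻¹)) * ε + (t * (t+ε)⁻¹) * ((ε * (t+ε)⁻¹) * ε)) := by
    field_simp; ring
  rw [e3, abs_neg, abs_of_nonneg (by positivity)]
  have k1 := mul_le_mul_of_nonneg_right (mul_le_mul e1 e1 e4 zero_le_one) hε.le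
  have k2 := mul_le_mul_of_nonneg_right (mul_le_mul e1 e2 e5 zero_le_one) hε.le
  have k3 : t * (t+ε)⁻¹ * (ε * (t+ε)⁻¹ * ε) = t * (t+ε)⁻¹ * (ε * (t+ε)⁻¹) * ε := by ring
  linarith

-- R8 : the function F t = t * (d * (t * d)) satisfies |F*(t*F) - F*t - (t*F - t)| ≤ 3 ε
lemma R8 {t ε : ℝ} (ht : 0 ≤ t) (hε : 0 < ε) :
    |(t * ((max t 0 + ε)⁻¹ * (t * (max t 0 + ε)⁻¹)))
        * (t * (t * ((max t 0 + ε)⁻¹ * (t * (max t 0 + ε)⁻¹))))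
      - (t * ((max t 0 + ε)⁻¹ * (t * (max t 0 + ε)⁻¹))) * t
      - (t * (t * ((max t 0 + ε)⁻¹ * (t * (max t 0 + ε)⁻¹))) - t)| ≤ 3 * ε := by
  rw [max_eq_left ht]
  have hd : 0 < t + ε := by linarith
  have hd0 : 0 ≤ (t + ε)⁻¹ := (inv_pos.mpr hd).le
  set d := (t + ε)⁻¹ with hddef
  have hd1 : (t + ε) * d = 1 := mul_inv_cancel₀ hd.ne'
  set A1 := t * d with hA1def
  set A2 := ε * d with hA2def
  have hA12 : A1 + A2 = 1 := by rw [hA1def, hA2def, ← hd1]; ring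
  have hA10 : 0 ≤ A1 := mul_nonneg ht hd0
  have hA20 : 0 ≤ A2 := mul_nonneg hε.le hd0
  have hA11 : A1 ≤ 1 := by linarith
  have htA2 : t * A2 = ε * A1 := by rw [hA1def, hA2def]; ring
  have hshape : (t * (d * (t * d))) * (t * (t * (d * (t * d))))
      - (t * (d * (t * d))) * t - (t * (t * (d * (t * d))) - t)
      = t * ((1 - A1*A1) * (1 - A1*A1)) := by rw [hA1def]; ring
  rw [hshape]
  have h1G : 1 - A1*A1 = A2*(1+A1) := by linear_combination (-(1:ℝ) - A1) * hA12
  have key : t * ((1 - A1*A1) * (1 - A1*A1)) = ε * ((A1*A2) * ((1+A1)*(1+A1))) := by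
    rw [h1G]; linear_combination (A2 * (1+A1) * (1+A1)) * htA2
  rw [key, abs_of_nonneg (by positivity)]
  have hprod : (A1*A2) * ((1+A1)*(1+A1)) ≤ 3 := by nlinarith [sq_nonneg (A1 - A2)]
  calc ε * ((A1*A2) * ((1+A1)*(1+A1))) ≤ ε * 3 := by
        exact mul_le_mul_of_nonneg_left hprod hε.le
    _ = 3 * ε := by ring

/-! ### the ε sequence -/

def en (n : ℕ) : ℝ := 1 / (n + 1)

lemma en_pos (n : ℕ) : 0 < en n := by unfold en; positivity

lemma en_tendsto : Tendsto en atTop (𝓝 0) := tendsto_one_div_add_atTop_nhds_zero_nat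

lemma en_antitone : Antitone en := fun m n h => by
  unfold en
  gcongr

lemma sqrt_en_tendsto : Tendsto (fun n => Real.sqrt (en n)) atTop (𝓝 0) := by
  have := (Real.continuous_sqrt.tendsto' 0 0 Real.sqrt_zero).comp en_tendsto
  exact this

/-! ### closure helpers -/

variable {A : Type*} [NonUnitalCStarAlgebra A]

lemma mem_closure_mul_right {S T : Set A} {c : A} (h : ∀ s ∈ S, s * c ∈ T) {y : A}
    (hy : y ∈ closure S) : y * c ∈ closure T :=
  map_mem_closure (f := (· * c)) (continuous_mul_right c) hy h

lemma mem_closure_mul_left {S T : Set A} {c : A} (h : ∀ s ∈ S, c * s ∈ T) {y : A}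
    (hy : y ∈ closure S) : c * y ∈ closure T :=
  map_mem_closure (f := (c * ·)) (continuous_mul_left c) hy h

lemma mem_closure_star {S T : Set A} (h : ∀ s ∈ S, star s ∈ T) {y : A}
    (hy : y ∈ closure S) : star y ∈ closure T :=
  map_mem_closure continuous_star hy h

lemma mem_closure_mul₂ {S T U : Set A} (h : ∀ s ∈ S, ∀ t ∈ T, s * t ∈ U) {y z : A}
    (hy : y ∈ closure S) (hz : z ∈ closure T) : y * z ∈ closure U :=
  map_mem_closure₂ continuous_mul hy hz h

lemma mem_closure_sub₂ {S T U : Set A} (h : ∀ s ∈ S, ∀ t ∈ T, s - t ∈ U) {y z : A}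
    (hy : y ∈ closure S) (hz : z ∈ closure T) : y - z ∈ closure U :=
  map_mem_closure₂ continuous_sub hy hz h

lemma mem_closure_of_bound {S : Set A} {y : A} {f : ℕ → A} {g : ℕ → ℝ}
    (hf : ∀ n, f n ∈ S) (hb : ∀ n, ‖f n - y‖ ≤ g n) (hg : Tendsto g atTop (𝓝 0)) :
    y ∈ closure S := by
  have ht : Tendsto f atTop (𝓝 y) := by
    rw [tendsto_iff_norm_sub_tendsto_zero]
    exact squeeze_zero (fun n => norm_nonneg _) hb hg
  exact mem_closure_of_tendsto ht (Filter.Eventually.of_forall hf)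

/-! ### cfcₙ helpers -/

variable [PartialOrder A] [StarOrderedRing A]

lemma cfc_mul' {f g : ℝ → ℝ} (hf : Continuous f) (hf0 : f 0 = 0) (hg : Continuous g)
    (hg0 : g 0 = 0) (p : A) :
    cfcₙ (fun t => f t * g t) p = cfcₙ f p * cfcₙ g p :=
  cfcₙ_mul f g p hf.continuousOn hf0 hg.continuousOn hg0

lemma cfc_sub' {f g : ℝ → ℝ} (hf : Continuous f) (hf0 : f 0 = 0) (hg : Continuous g)
    (hg0 : g 0 = 0) (p : A) :
    cfcₙ (fun t => f t - g t) p = cfcₙ f p - cfcₙ g p :=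
  cfcₙ_sub f g p hf.continuousOn hf0 hg.continuousOn hg0

lemma cfc_norm_le {f : ℝ → ℝ} {c : ℝ} {p : A} (hp : 0 ≤ p) (h : ∀ t, 0 ≤ t → |f t| ≤ c) :
    ‖cfcₙ f p‖ ≤ c :=
  norm_cfcₙ_le fun t ht => by
    rw [Real.norm_eq_abs]; exact h t (quasispectrum_nonneg_of_nonneg p hp t ht)

lemma cfc_sa (f : ℝ → ℝ) (p : A) : star (cfcₙ f p) = cfcₙ f p :=
  (cfcₙ_predicate f p : IsSelfAdjoint _).star_eq

lemma sqrt_cfc_mul_self {p : A} (hp : 0 ≤ p) : cfcₙ Real.sqrt p * cfcₙ Real.sqrt p = p := by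
  rw [← cfc_mul' Real.continuous_sqrt Real.sqrt_zero Real.continuous_sqrt Real.sqrt_zero p]
  have h : (quasispectrum ℝ p).EqOn (fun t => Real.sqrt t * Real.sqrt t) id := fun t ht =>
    Real.mul_self_sqrt (quasispectrum_nonneg_of_nonneg p hp t ht)
  rw [cfcₙ_congr h, cfcₙ_id ℝ p (IsSelfAdjoint.of_nonneg hp)]

lemma norm_mul_eq_of_star_mul_eq {x s : A} (h : star x * x = star s * s) (v : A) :
    ‖x * v‖ = ‖s * v‖ := by
  have h1 : ‖x * v‖ * ‖x * v‖ = ‖s * v‖ * ‖s * v‖ := by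
    rw [← CStarRing.norm_star_mul_self, ← CStarRing.norm_star_mul_self]
    have e1 : star (x * v) * (x * v) = star v * (star x * x) * v := by
      rw [star_mul]; noncomm_ring
    have e2 : star (s * v) * (s * v) = star v * (star s * s) * v := by
      rw [star_mul]; noncomm_ring
    rw [e1, e2, h]
  exact mul_self_inj (norm_nonneg _) (norm_nonneg _) |>.mp h1


variable {A : Type*} [NonUnitalCStarAlgebra A] [PartialOrder A] [StarOrderedRing A]

/-! ### more cfcₙ helpers -/

lemma cfc_id_mul {p : A} (hpsa : IsSelfAdjoint p) {g : ℝ → ℝ} (hg : Continuous g)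
    (hg0 : g 0 = 0) : cfcₙ (fun t => t * g t) p = p * cfcₙ g p := by
  have h : cfcₙ (fun t : ℝ => t * g t) p = cfcₙ (fun t : ℝ => t) p * cfcₙ g p :=
    cfcₙ_mul _ g p continuous_id.continuousOn rfl hg.continuousOn hg0
  rw [h, cfcₙ_id' ℝ p hpsa]

lemma cfc_mul_id {p : A} (hpsa : IsSelfAdjoint p) {g : ℝ → ℝ} (hg : Continuous g)
    (hg0 : g 0 = 0) : cfcₙ (fun t => g t * t) p = cfcₙ g p * p := by
  have h : cfcₙ (fun t : ℝ => g t * t) p = cfcₙ g p * cfcₙ (fun t : ℝ => t) p :=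
    cfcₙ_mul g _ p hg.continuousOn hg0 continuous_id.continuousOn rfl
  rw [h, cfcₙ_id' ℝ p hpsa]

lemma cfc_sub_id {p : A} (hpsa : IsSelfAdjoint p) {g : ℝ → ℝ} (hg : Continuous g)
    (hg0 : g 0 = 0) : cfcₙ (fun t => g t - t) p = cfcₙ g p - p := by
  have h : cfcₙ (fun t : ℝ => g t - t) p = cfcₙ g p - cfcₙ (fun t : ℝ => t) p :=
    cfcₙ_sub g _ p hg.continuousOn hg0 continuous_id.continuousOn rfl
  rw [h, cfcₙ_id' ℝ p hpsa]

/-! ### membership lemmas -/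

lemma self_mem (p : A) (hp : 0 ≤ p) : p ∈ closure {y : A | ∃ c, y = p * c} := by
  have hpsa : IsSelfAdjoint p := .of_nonneg hp
  refine mem_closure_of_bound (f := fun n => p * cfcₙ (fun t => t * (max t 0 + en n)⁻¹) p)
    (g := en) (fun n => ⟨_, rfl⟩) (fun n => ?_) en_tendsto
  have hc : Continuous fun t : ℝ => t * (max t 0 + en n)⁻¹ :=
    continuous_id.mul (contD (en_pos n))
  have k1 : cfcₙ (fun t : ℝ => t * (t * (max t 0 + en n)⁻¹) - t) p
      = cfcₙ (fun t : ℝ => t * (t * (max t 0 + en n)⁻¹)) p - p :=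
    cfc_sub_id hpsa (continuous_id.mul hc) (by simp)
  have k2 : cfcₙ (fun t : ℝ => t * (t * (max t 0 + en n)⁻¹)) p
      = p * cfcₙ (fun t : ℝ => t * (max t 0 + en n)⁻¹) p :=
    cfc_id_mul hpsa hc (by simp)
  rw [← k2, ← k1]
  exact cfc_norm_le hp fun t ht => R3 ht (en_pos n)

lemma sqrt_mem (p : A) (hp : 0 ≤ p) : cfcₙ Real.sqrt p ∈ closure {y : A | ∃ c, y = p * c} := by
  have hpsa : IsSelfAdjoint p := .of_nonneg hp
  refine mem_closure_of_bound
    (f := fun n => p * cfcₙ (fun t => Real.sqrt t * (max t 0 + en n)⁻¹) p)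
    (g := fun n => Real.sqrt (en n)) (fun n => ⟨_, rfl⟩) (fun n => ?_) sqrt_en_tendsto
  have hgc : Continuous fun t : ℝ => Real.sqrt t * (max t 0 + en n)⁻¹ :=
    Real.continuous_sqrt.mul (contD (en_pos n))
  have k1 : cfcₙ (fun t : ℝ => t * (Real.sqrt t * (max t 0 + en n)⁻¹) - Real.sqrt t) p
      = cfcₙ (fun t : ℝ => t * (Real.sqrt t * (max t 0 + en n)⁻¹)) p - cfcₙ Real.sqrt p :=
    cfcₙ_sub _ _ p (continuous_id.mul hgc).continuousOn (by simp)
      Real.continuous_sqrt.continuousOn Real.sqrt_zero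
  have k2 : cfcₙ (fun t : ℝ => t * (Real.sqrt t * (max t 0 + en n)⁻¹)) p
      = p * cfcₙ (fun t : ℝ => Real.sqrt t * (max t 0 + en n)⁻¹) p :=
    cfc_id_mul hpsa hgc (by simp)
  rw [← k2, ← k1]
  exact cfc_norm_le hp fun t ht => R4 ht (en_pos n)

lemma self_mem_her (p : A) (hp : 0 ≤ p) : p ∈ closure {y : A | ∃ c, y = p * c * p} := by
  have hpsa : IsSelfAdjoint p := .of_nonneg hp
  refine mem_closure_of_bound
    (f := fun n => p * cfcₙ (fun t => (max t 0 + en n)⁻¹ * (t * (max t 0 + en n)⁻¹)) p * p)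
    (g := fun n => 3 * en n) (fun n => ⟨_, rfl⟩) (fun n => ?_) ?_
  · have hkc : Continuous fun t : ℝ => (max t 0 + en n)⁻¹ * (t * (max t 0 + en n)⁻¹) :=
      (contD (en_pos n)).mul (continuous_id.mul (contD (en_pos n)))
    have hFc : Continuous fun t : ℝ => t * ((max t 0 + en n)⁻¹ * (t * (max t 0 + en n)⁻¹)) := continuous_id.mul hkc
    have k1 : cfcₙ (fun t : ℝ => t * ((max t 0 + en n)⁻¹ * (t * (max t 0 + en n)⁻¹)) * t - t) p
        = cfcₙ (fun t : ℝ => t * ((max t 0 + en n)⁻¹ * (t * (max t 0 + en n)⁻¹)) * t) p - p :=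
      cfc_sub_id hpsa (hFc.mul continuous_id) (by simp)
    have k2 : cfcₙ (fun t : ℝ => t * ((max t 0 + en n)⁻¹ * (t * (max t 0 + en n)⁻¹)) * t) p
        = cfcₙ (fun t : ℝ => t * ((max t 0 + en n)⁻¹ * (t * (max t 0 + en n)⁻¹))) p * p :=
      cfc_mul_id hpsa hFc (by simp)
    have k3 : cfcₙ (fun t : ℝ => t * ((max t 0 + en n)⁻¹ * (t * (max t 0 + en n)⁻¹))) p
        = p * cfcₙ (fun t : ℝ => (max t 0 + en n)⁻¹ * (t * (max t 0 + en n)⁻¹)) p :=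
      cfc_id_mul hpsa hkc (by simp)
    rw [← k3, ← k2, ← k1]
    exact cfc_norm_le hp fun t ht => R7 ht (en_pos n)
  · simpa using en_tendsto.const_mul (3:ℝ)

lemma norm_le_sqrt_of_mul_star {y : A} {c : ℝ} (h : ‖y * star y‖ ≤ c) : ‖y‖ ≤ Real.sqrt c := by
  have h2 : ‖y‖ * ‖y‖ ≤ c := by rw [← CStarRing.norm_self_mul_star]; exact h
  calc ‖y‖ = Real.sqrt (‖y‖ * ‖y‖) := (Real.sqrt_mul_self (norm_nonneg y)).symm
    _ ≤ Real.sqrt c := Real.sqrt_le_sqrt h2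

lemma mem_closure_mul_star_self (x : A) :
    x ∈ closure {y : A | ∃ c, y = (x * star x) * c} := by
  obtain ⟨q, hq⟩ : ∃ q, q = x * star x := ⟨_, rfl⟩
  rw [← hq]
  have hq0 : 0 ≤ q := hq ▸ mul_star_self_nonneg x
  have hqsa : IsSelfAdjoint q := .of_nonneg hq0
  refine mem_closure_of_bound
    (f := fun n => q * (cfcₙ (fun t => (max t 0 + en n)⁻¹ * (t * (max t 0 + en n)⁻¹)) q * x))
    (g := fun n => Real.sqrt (3 * en n)) (fun n => ⟨_, rfl⟩) (fun n => ?_) ?_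
  · have hkc : Continuous fun t : ℝ => (max t 0 + en n)⁻¹ * (t * (max t 0 + en n)⁻¹) :=
      (contD (en_pos n)).mul (continuous_id.mul (contD (en_pos n)))
    have hFc : Continuous fun t : ℝ => t * ((max t 0 + en n)⁻¹ * (t * (max t 0 + en n)⁻¹)) := continuous_id.mul hkc
    have hE : q * cfcₙ (fun t : ℝ => (max t 0 + en n)⁻¹ * (t * (max t 0 + en n)⁻¹)) q = cfcₙ (fun t : ℝ => t * ((max t 0 + en n)⁻¹ * (t * (max t 0 + en n)⁻¹))) q :=
      (cfc_id_mul hqsa hkc (by simp)).symm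
    have e0 : q * (cfcₙ (fun t : ℝ => (max t 0 + en n)⁻¹ * (t * (max t 0 + en n)⁻¹)) q * x) - x
        = cfcₙ (fun t : ℝ => t * ((max t 0 + en n)⁻¹ * (t * (max t 0 + en n)⁻¹))) q * x - x := by
      rw [← mul_assoc q (cfcₙ (fun t : ℝ => (max t 0 + en n)⁻¹ * (t * (max t 0 + en n)⁻¹)) q) x, hE]
    rw [e0]
    apply norm_le_sqrt_of_mul_star
    have hEsa : star (cfcₙ (fun t : ℝ => t * ((max t 0 + en n)⁻¹ * (t * (max t 0 + en n)⁻¹))) q) = cfcₙ (fun t : ℝ => t * ((max t 0 + en n)⁻¹ * (t * (max t 0 + en n)⁻¹))) q := cfc_sa _ q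
    have expand : (cfcₙ (fun t : ℝ => t * ((max t 0 + en n)⁻¹ * (t * (max t 0 + en n)⁻¹))) q * x - x) * star (cfcₙ (fun t : ℝ => t * ((max t 0 + en n)⁻¹ * (t * (max t 0 + en n)⁻¹))) q * x - x)
        = cfcₙ (fun t : ℝ => t * ((max t 0 + en n)⁻¹ * (t * (max t 0 + en n)⁻¹))) q * ((x * star x) * cfcₙ (fun t : ℝ => t * ((max t 0 + en n)⁻¹ * (t * (max t 0 + en n)⁻¹))) q)
          - cfcₙ (fun t : ℝ => t * ((max t 0 + en n)⁻¹ * (t * (max t 0 + en n)⁻¹))) q * (x * star x)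
          - ((x * star x) * cfcₙ (fun t : ℝ => t * ((max t 0 + en n)⁻¹ * (t * (max t 0 + en n)⁻¹))) q - (x * star x)) := by
      rw [star_sub, star_mul, hEsa]
      noncomm_ring
    rw [← hq] at expand
    rw [expand]
    have h1 : q * cfcₙ (fun t : ℝ => t * ((max t 0 + en n)⁻¹ * (t * (max t 0 + en n)⁻¹))) q = cfcₙ (fun t : ℝ => t * (t * ((max t 0 + en n)⁻¹ * (t * (max t 0 + en n)⁻¹)))) q :=
      (cfc_id_mul hqsa hFc (by simp)).symm
    have h2 : cfcₙ (fun t : ℝ => t * ((max t 0 + en n)⁻¹ * (t * (max t 0 + en n)⁻¹))) q * q = cfcₙ (fun t : ℝ => (t * ((max t 0 + en n)⁻¹ * (t * (max t 0 + en n)⁻¹))) * t) q :=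
      (cfc_mul_id hqsa hFc (by simp)).symm
    have h3 : cfcₙ (fun t : ℝ => t * ((max t 0 + en n)⁻¹ * (t * (max t 0 + en n)⁻¹))) q * cfcₙ (fun t : ℝ => t * (t * ((max t 0 + en n)⁻¹ * (t * (max t 0 + en n)⁻¹)))) q
        = cfcₙ (fun t : ℝ => (t * ((max t 0 + en n)⁻¹ * (t * (max t 0 + en n)⁻¹))) * (t * (t * ((max t 0 + en n)⁻¹ * (t * (max t 0 + en n)⁻¹))))) q :=
      (cfcₙ_mul _ _ q hFc.continuousOn (by simp) (continuous_id.mul hFc).continuousOn (by simp)).symm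
    have h6 : cfcₙ (fun t : ℝ => t * (t * ((max t 0 + en n)⁻¹ * (t * (max t 0 + en n)⁻¹)))) q - q = cfcₙ (fun t : ℝ => t * (t * ((max t 0 + en n)⁻¹ * (t * (max t 0 + en n)⁻¹))) - t) q :=
      (cfc_sub_id hqsa (continuous_id.mul hFc) (by simp)).symm
    have h4 : cfcₙ (fun t : ℝ => (t * ((max t 0 + en n)⁻¹ * (t * (max t 0 + en n)⁻¹))) * (t * (t * ((max t 0 + en n)⁻¹ * (t * (max t 0 + en n)⁻¹))))) q - cfcₙ (fun t : ℝ => (t * ((max t 0 + en n)⁻¹ * (t * (max t 0 + en n)⁻¹))) * t) q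
        = cfcₙ (fun t : ℝ => (t * ((max t 0 + en n)⁻¹ * (t * (max t 0 + en n)⁻¹))) * (t * (t * ((max t 0 + en n)⁻¹ * (t * (max t 0 + en n)⁻¹)))) - (t * ((max t 0 + en n)⁻¹ * (t * (max t 0 + en n)⁻¹))) * t) q :=
      (cfcₙ_sub _ _ q (hFc.mul (continuous_id.mul hFc)).continuousOn (by simp)
        (hFc.mul continuous_id).continuousOn (by simp)).symm
    have h5 : cfcₙ (fun t : ℝ => (t * ((max t 0 + en n)⁻¹ * (t * (max t 0 + en n)⁻¹))) * (t * (t * ((max t 0 + en n)⁻¹ * (t * (max t 0 + en n)⁻¹)))) - (t * ((max t 0 + en n)⁻¹ * (t * (max t 0 + en n)⁻¹))) * t) q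
          - cfcₙ (fun t : ℝ => t * (t * ((max t 0 + en n)⁻¹ * (t * (max t 0 + en n)⁻¹))) - t) q
        = cfcₙ (fun t : ℝ => (t * ((max t 0 + en n)⁻¹ * (t * (max t 0 + en n)⁻¹))) * (t * (t * ((max t 0 + en n)⁻¹ * (t * (max t 0 + en n)⁻¹)))) - (t * ((max t 0 + en n)⁻¹ * (t * (max t 0 + en n)⁻¹))) * t - (t * (t * ((max t 0 + en n)⁻¹ * (t * (max t 0 + en n)⁻¹))) - t)) q :=
      (cfcₙ_sub _ _ q
        ((hFc.mul (continuous_id.mul hFc)).sub (hFc.mul continuous_id)).continuousOn (by simp)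
        ((continuous_id.mul hFc).sub continuous_id).continuousOn (by simp)).symm
    rw [h1, h2, h3, h6, h4, h5]
    exact cfc_norm_le hq0 fun t ht => R8 ht (en_pos n)
  · have h3' : Tendsto (fun n => (3:ℝ) * en n) atTop (𝓝 0) := by
      simpa using en_tendsto.const_mul (3:ℝ)
    exact (Real.continuous_sqrt.tendsto' 0 0 Real.sqrt_zero).comp h3'

lemma mem_closure_self_mul (w : A) : w ∈ closure {y : A | ∃ c, y = w * c} := by
  refine closure_mono ?_ (mem_closure_mul_star_self w)
  rintro y ⟨c, rfl⟩
  exact ⟨star w * c, by rw [mul_assoc]⟩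

/-! ### structural lemmas -/

lemma TOp_eq (p : A) (hp : 0 ≤ p) :
    closure {y : A | ∃ z ∈ closure {y : A | ∃ c, y = p * c * p}, ∃ c, y = z * c}
      = closure {y : A | ∃ c, y = p * c} := by
  apply subset_antisymm
  · apply closure_minimal ?_ isClosed_closure
    rintro y ⟨z, hz, c, rfl⟩
    refine mem_closure_mul_right (S := {y : A | ∃ c, y = p * c * p}) (fun s hs => ?_) hz
    obtain ⟨c', rfl⟩ := hs
    exact ⟨c' * p * c, by simp [mul_assoc]⟩
  · apply closure_minimal ?_ isClosed_closure
    rintro y ⟨c, rfl⟩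
    exact subset_closure ⟨p, self_mem_her p hp, c, rfl⟩

lemma rightIdeal_det {a p : A} (ha : 0 ≤ a) (hp : 0 ≤ p)
    (h : closure {y : A | ∃ c, y = a * c * a} = closure {y : A | ∃ c, y = p * c * p}) :
    closure {y : A | ∃ c, y = a * c} = closure {y : A | ∃ c, y = p * c} := by
  rw [← TOp_eq a ha, ← TOp_eq p hp, h]

lemma closure_xA_eq (x : A) :
    closure {y : A | ∃ c, y = (x * star x) * c} = closure {y : A | ∃ c, y = x * c} := by
  apply subset_antisymm
  · apply closure_mono
    rintro y ⟨c, rfl⟩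
    exact ⟨star x * c, by rw [mul_assoc]⟩
  · apply closure_minimal ?_ isClosed_closure
    rintro y ⟨c, rfl⟩
    refine mem_closure_mul_right (S := {y : A | ∃ c, y = (x * star x) * c})
      (fun s hs => ?_) (mem_closure_mul_star_self x)
    obtain ⟨d, rfl⟩ := hs
    exact ⟨d * c, by rw [mul_assoc]⟩

lemma herSub_q_eq (x : A) :
    closure {y : A | ∃ c, y = (x * star x) * c * (x * star x)}
      = closure {y : A | ∃ c, y = x * c * star x} := by
  apply subset_antisymm
  · apply closure_mono
    rintro y ⟨c, rfl⟩
    exact ⟨star x * c * x, by noncomm_ring⟩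
  · apply closure_minimal ?_ isClosed_closure
    rintro y ⟨c, rfl⟩
    have hqsa : star (x * star x) = x * star x := by rw [star_mul, star_star]
    have h1 : x ∈ closure {y : A | ∃ d, y = (x * star x) * d} := mem_closure_mul_star_self x
    have h2 : star x ∈ closure {y : A | ∃ d, y = star d * (x * star x)} := by
      refine mem_closure_star (S := {y : A | ∃ d, y = (x * star x) * d}) (fun s hs => ?_) h1
      obtain ⟨d, rfl⟩ := hs
      exact ⟨d, by rw [star_mul, hqsa]⟩
    have step1 : x * (c * star x) ∈ closure {y : A | ∃ d, y = (x * star x) * d * star x} := by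
      refine mem_closure_mul_right (S := {y : A | ∃ d, y = (x * star x) * d}) (fun s hs => ?_) h1
      obtain ⟨d, rfl⟩ := hs
      exact ⟨d * c, by simp [mul_assoc]⟩
    have step2 : {y : A | ∃ d, y = (x * star x) * d * star x}
        ⊆ closure {y : A | ∃ c, y = (x * star x) * c * (x * star x)} := by
      rintro y ⟨d, rfl⟩
      refine mem_closure_mul_left (S := {y : A | ∃ d', y = star d' * (x * star x)})
        (fun s hs => ?_) h2
      obtain ⟨d', rfl⟩ := hs
      exact ⟨d * star d', by simp [mul_assoc]⟩
    have : x * (c * star x) ∈ closure {y : A | ∃ c, y = (x * star x) * c * (x * star x)} :=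
      (closure_minimal step2 isClosed_closure) step1
    rwa [← mul_assoc] at this

def SOp (R : Set A) : Set A := closure {y : A | ∃ u ∈ R, ∃ v ∈ R, y = u * star v}

lemma SOp_eq (w : A) :
    SOp (closure {y : A | ∃ c, y = w * c}) = closure {y : A | ∃ c, y = w * c * star w} := by
  apply subset_antisymm
  · apply closure_minimal ?_ isClosed_closure
    rintro y ⟨u, hu, v, hv, rfl⟩
    have hv' : star v ∈ closure {y : A | ∃ c, y = star c * star w} := by
      refine mem_closure_star (S := {y : A | ∃ c, y = w * c}) (fun s hs => ?_) hv
      obtain ⟨c, rfl⟩ := hs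
      exact ⟨c, by rw [star_mul]⟩
    refine mem_closure_mul₂ (S := {y : A | ∃ c, y = w * c})
      (T := {y : A | ∃ c, y = star c * star w}) (fun s hs t ht => ?_) hu hv'
    obtain ⟨c, rfl⟩ := hs
    obtain ⟨c', rfl⟩ := ht
    exact ⟨c * star c', by noncomm_ring⟩
  · apply closure_mono
    rintro y ⟨c, rfl⟩
    exact ⟨w * c, subset_closure ⟨c, rfl⟩, w, mem_closure_self_mul w, rfl⟩

lemma herSub_eq_of_closure_eq {x b : A} (hb : 0 ≤ b)
    (h : closure {y : A | ∃ c, y = x * c} = closure {y : A | ∃ c, y = b * c}) :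
    closure {y : A | ∃ c, y = (x * star x) * c * (x * star x)}
      = closure {y : A | ∃ c, y = b * c * b} := by
  have hbsa : star b = b := (IsSelfAdjoint.of_nonneg hb).star_eq
  calc closure {y : A | ∃ c, y = (x * star x) * c * (x * star x)}
      = closure {y : A | ∃ c, y = x * c * star x} := herSub_q_eq x
    _ = SOp (closure {y : A | ∃ c, y = x * c}) := (SOp_eq x).symm
    _ = SOp (closure {y : A | ∃ c, y = b * c}) := by rw [h]
    _ = closure {y : A | ∃ c, y = b * c * star b} := SOp_eq b
    _ = closure {y : A | ∃ c, y = b * c * b} := by rw [hbsa]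


variable {A : Type*} [NonUnitalCStarAlgebra A] [PartialOrder A] [StarOrderedRing A]

lemma forward {x a b : A} (ha : 0 ≤ a) (hb : 0 ≤ b)
    (h1 : closure {y : A | ∃ c, y = a * c * a}
      = closure {y : A | ∃ c, y = (star x * x) * c * (star x * x)})
    (h2 : closure {y : A | ∃ c, y = b * c * b}
      = closure {y : A | ∃ c, y = (x * star x) * c * (x * star x)}) :
    ∃ Φ : A → A,
      Set.BijOn Φ (closure {y : A | ∃ c, y = a * c}) (closure {y : A | ∃ c, y = b * c}) ∧
      (∀ y ∈ closure {y : A | ∃ c, y = a * c}, ∀ z ∈ closure {y : A | ∃ c, y = a * c},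
        Φ (y + z) = Φ y + Φ z) ∧
      (∀ y ∈ closure {y : A | ∃ c, y = a * c}, ∀ c : A, Φ (y * c) = Φ y * c) ∧
      (∀ y ∈ closure {y : A | ∃ c, y = a * c}, ∀ z ∈ closure {y : A | ∃ c, y = a * c},
        star (Φ y) * Φ z = star y * z) := by
  have hq0 : 0 ≤ x * star x := mul_star_self_nonneg x
  have hEb : closure {y : A | ∃ c, y = b * c} = closure {y : A | ∃ c, y = x * c} :=
    (rightIdeal_det hb hq0 h2).trans (closure_xA_eq x)
  obtain ⟨p, hpdef⟩ : ∃ p, p = star x * x := ⟨_, rfl⟩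
  rw [← hpdef] at h1
  have hp : 0 ≤ p := hpdef ▸ star_mul_self_nonneg x
  have hpsa : IsSelfAdjoint p := .of_nonneg hp
  have hEa : closure {y : A | ∃ c, y = a * c} = closure {y : A | ∃ c, y = p * c} :=
    rightIdeal_det ha hp h1
  rw [hEa, hEb]
  obtain ⟨s, hsdef⟩ : ∃ s, s = cfcₙ Real.sqrt p := ⟨_, rfl⟩
  obtain ⟨g, hgdef⟩ : ∃ g : ℕ → A,
      g = fun n => cfcₙ (fun t => Real.sqrt t * (max t 0 + en n)⁻¹) p := ⟨_, rfl⟩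
  have hg : ∀ n, g n = cfcₙ (fun t => Real.sqrt t * (max t 0 + en n)⁻¹) p := fun n => by
    rw [hgdef]
  have hgc : ∀ n, Continuous fun t : ℝ => Real.sqrt t * (max t 0 + en n)⁻¹ := fun n =>
    Real.continuous_sqrt.mul (contD (en_pos n))
  have hss : s * s = p := by rw [hsdef]; exact sqrt_cfc_mul_self hp
  have hssa : star s = s := by rw [hsdef]; exact cfc_sa _ _
  have hxnorm : ∀ v, ‖x * v‖ = ‖s * v‖ := fun v => by
    refine norm_mul_eq_of_star_mul_eq ?_ v
    rw [hssa, hss, hpdef]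
  -- ‖s * g n‖ ≤ 1
  have hsg : ∀ n, s * g n = cfcₙ (fun t => Real.sqrt t * (Real.sqrt t * (max t 0 + en n)⁻¹)) p := fun n => by
    rw [hsdef, hg n]
    exact (cfc_mul' Real.continuous_sqrt Real.sqrt_zero (hgc n) (by simp) p).symm
  have hsgnorm : ∀ n, ‖s * g n‖ ≤ 1 := fun n => by
    rw [hsg n]; exact cfc_norm_le hp fun t ht => R1 ht (en_pos n)
  have hbound1 : ∀ n v, ‖x * (g n * v)‖ ≤ ‖v‖ := fun n v => by
    calc ‖x * (g n * v)‖ = ‖s * (g n * v)‖ := hxnorm _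
      _ = ‖s * g n * v‖ := by rw [← mul_assoc s (g n) v]
      _ ≤ ‖s * g n‖ * ‖v‖ := norm_mul_le _ _
      _ ≤ 1 * ‖v‖ := mul_le_mul_of_nonneg_right (hsgnorm n) (norm_nonneg v)
      _ = ‖v‖ := one_mul _
  -- ‖x (g n (p c)) - x (s c)‖ ≤ en n ‖c‖
  have hgp : ∀ n, g n * p = cfcₙ (fun t => Real.sqrt t * (max t 0 + en n)⁻¹ * t) p := fun n => by
    rw [hg n]; exact (cfc_mul_id hpsa (hgc n) (by simp)).symm
  have hsgp : ∀ n, s * (g n * p)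
      = cfcₙ (fun t => Real.sqrt t * (Real.sqrt t * (max t 0 + en n)⁻¹ * t)) p := fun n => by
    rw [hsdef, hgp n]
    exact (cfc_mul' Real.continuous_sqrt Real.sqrt_zero ((hgc n).mul continuous_id)
      (by simp) p).symm
  have hss' : s * s = cfcₙ (fun t => Real.sqrt t * Real.sqrt t) p := by
    rw [hsdef]
    exact (cfc_mul' Real.continuous_sqrt Real.sqrt_zero Real.continuous_sqrt Real.sqrt_zero p).symm
  have hP0norm : ∀ n, ‖s * (g n * p) - s * s‖ ≤ en n := fun n => by
    have hd : s * (g n * p) - s * s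
        = cfcₙ (fun t => Real.sqrt t * (Real.sqrt t * (max t 0 + en n)⁻¹ * t) - Real.sqrt t * Real.sqrt t) p := by
      rw [hsgp n, hss']
      exact (cfcₙ_sub _ _ p
        (Real.continuous_sqrt.mul ((hgc n).mul continuous_id)).continuousOn (by simp)
        (Real.continuous_sqrt.mul Real.continuous_sqrt).continuousOn (by simp)).symm
    rw [hd]
    exact cfc_norm_le hp fun t ht => R2 ht (en_pos n)
  have hP0 : ∀ n (c : A), ‖x * (g n * (p * c)) - x * (s * c)‖ ≤ en n * ‖c‖ := fun n c => by
    have e1 : x * (g n * (p * c)) - x * (s * c) = x * (g n * p * c - s * c) := by noncomm_ring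
    have e2 : s * (g n * p * c - s * c) = (s * (g n * p) - s * s) * c := by noncomm_ring
    calc ‖x * (g n * (p * c)) - x * (s * c)‖ = ‖x * (g n * p * c - s * c)‖ := by rw [e1]
      _ = ‖s * (g n * p * c - s * c)‖ := hxnorm _
      _ = ‖(s * (g n * p) - s * s) * c‖ := by rw [e2]
      _ ≤ ‖s * (g n * p) - s * s‖ * ‖c‖ := norm_mul_le _ _
      _ ≤ en n * ‖c‖ := mul_le_mul_of_nonneg_right (hP0norm n) (norm_nonneg c)
  -- density
  have hdense : ∀ y ∈ closure {y : A | ∃ c, y = p * c}, ∀ δ : ℝ, 0 < δ →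
      ∃ c : A, ‖y - p * c‖ < δ := by
    intro y hy δ hδ
    obtain ⟨z, hzS, hdist⟩ := Metric.mem_closure_iff.mp hy δ hδ
    obtain ⟨c, rfl⟩ := hzS
    exact ⟨c, by rwa [← dist_eq_norm]⟩
  -- Cauchy
  have hcauchy : ∀ y ∈ closure {y : A | ∃ c, y = p * c},
      CauchySeq (fun n => x * (g n * y)) := by
    intro y hy
    rw [Metric.cauchySeq_iff]
    intro δ hδ
    obtain ⟨c, hc⟩ := hdense y hy (δ/4) (by positivity)
    obtain ⟨N, hN⟩ : ∃ N, en N * ‖c‖ < δ/4 := by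
      have ht : Tendsto (fun n => en n * ‖c‖) atTop (𝓝 0) := by
        simpa using en_tendsto.mul_const ‖c‖
      exact (ht.eventually_lt_const (by positivity)).exists
    have key : ∀ k, N ≤ k → ‖x * (g k * y) - x * (s * c)‖ < δ/2 := by
      intro k hk
      have e1 : x * (g k * y) - x * (s * c)
          = x * (g k * (y - p * c)) + (x * (g k * (p * c)) - x * (s * c)) := by noncomm_ring
      have hek : en k * ‖c‖ ≤ en N * ‖c‖ :=
        mul_le_mul_of_nonneg_right (en_antitone hk) (norm_nonneg c)
      calc ‖x * (g k * y) - x * (s * c)‖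
          ≤ ‖x * (g k * (y - p * c))‖ + ‖x * (g k * (p * c)) - x * (s * c)‖ := by
            rw [e1]; exact norm_add_le _ _
        _ ≤ ‖y - p * c‖ + en k * ‖c‖ := add_le_add (hbound1 k _) (hP0 k c)
        _ < δ/4 + δ/4 := by linarith
        _ = δ/2 := by ring
    refine ⟨N, fun m hm n hn => ?_⟩
    calc dist (x * (g m * y)) (x * (g n * y))
        ≤ dist (x * (g m * y)) (x * (s * c)) + dist (x * (s * c)) (x * (g n * y)) :=
          dist_triangle _ _ _
      _ = ‖x * (g m * y) - x * (s * c)‖ + ‖x * (g n * y) - x * (s * c)‖ := by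
          rw [dist_eq_norm, dist_comm (x * (s * c)), dist_eq_norm]
      _ < δ/2 + δ/2 := add_lt_add (key m hm) (key n hn)
      _ = δ := by ring
  -- define Φ
  obtain ⟨Φ, hΦdef⟩ : ∃ Φ : A → A, Φ = fun y => limUnder atTop (fun n => x * (g n * y)) :=
    ⟨_, rfl⟩
  have hΦeq : ∀ y (L : A), Tendsto (fun n => x * (g n * y)) atTop (𝓝 L) → Φ y = L := by
    intro y L hL
    rw [hΦdef]
    exact hL.limUnder_eq
  have hΦt : ∀ y ∈ closure {y : A | ∃ c, y = p * c},
      Tendsto (fun n => x * (g n * y)) atTop (𝓝 (Φ y)) := by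
    intro y hy
    obtain ⟨L, hL⟩ := cauchySeq_tendsto_of_complete (hcauchy y hy)
    rwa [hΦeq y L hL]
  have hΦpc : ∀ c : A, Φ (p * c) = x * (s * c) := by
    intro c
    apply hΦeq
    rw [tendsto_iff_norm_sub_tendsto_zero]
    refine squeeze_zero (fun n => norm_nonneg _) (fun n => hP0 n c) ?_
    simpa using en_tendsto.mul_const ‖c‖
  -- additivity
  have hadd : ∀ y ∈ closure {y : A | ∃ c, y = p * c}, ∀ z ∈ closure {y : A | ∃ c, y = p * c},
      Φ (y + z) = Φ y + Φ z := by
    intro y hy z hz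
    apply hΦeq
    have heq : (fun n => x * (g n * (y + z))) = fun n => x * (g n * y) + x * (g n * z) := by
      funext n; noncomm_ring
    rw [heq]
    exact (hΦt y hy).add (hΦt z hz)
  -- module map
  have hmul : ∀ y ∈ closure {y : A | ∃ c, y = p * c}, ∀ c : A, Φ (y * c) = Φ y * c := by
    intro y hy c
    apply hΦeq
    have heq : (fun n => x * (g n * (y * c))) = fun n => x * (g n * y) * c := by
      funext n; noncomm_ring
    rw [heq]
    exact (hΦt y hy).mul tendsto_const_nhds
  -- approximate unit facts
  have hpgn : ∀ n, p * g n = cfcₙ (fun t => t * (Real.sqrt t * (max t 0 + en n)⁻¹)) p := fun n => by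
    rw [hg n]; exact (cfc_id_mul hpsa (hgc n) (by simp)).symm
  have hwfun : ∀ n, g n * (p * g n)
      = cfcₙ (fun t => Real.sqrt t * (max t 0 + en n)⁻¹ * (t * (Real.sqrt t * (max t 0 + en n)⁻¹))) p := fun n => by
    rw [hpgn n, hg n]
    exact (cfc_mul' (hgc n) (by simp) (continuous_id.mul (hgc n)) (by simp) p).symm
  have hwnorm : ∀ n v, ‖g n * (p * g n) * v‖ ≤ ‖v‖ := fun n v => by
    have h1 : ‖g n * (p * g n)‖ ≤ 1 := by
      rw [hwfun n]; exact cfc_norm_le hp fun t ht => R6a ht (en_pos n)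
    calc ‖g n * (p * g n) * v‖ ≤ ‖g n * (p * g n)‖ * ‖v‖ := norm_mul_le _ _
      _ ≤ 1 * ‖v‖ := mul_le_mul_of_nonneg_right h1 (norm_nonneg v)
      _ = ‖v‖ := one_mul _
  have hwp : ∀ n, ‖g n * (p * g n) * p - p‖ ≤ 3 * en n := fun n => by
    have h1 : g n * (p * g n) * p
        = cfcₙ (fun t => Real.sqrt t * (max t 0 + en n)⁻¹ * (t * (Real.sqrt t * (max t 0 + en n)⁻¹)) * t) p := by
      rw [hwfun n]
      exact (cfc_mul_id hpsa ((hgc n).mul (continuous_id.mul (hgc n))) (by simp)).symm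
    have h2 : g n * (p * g n) * p - p
        = cfcₙ (fun t => Real.sqrt t * (max t 0 + en n)⁻¹ * (t * (Real.sqrt t * (max t 0 + en n)⁻¹)) * t - t) p := by
      rw [h1]
      exact (cfc_sub_id hpsa (((hgc n).mul (continuous_id.mul (hgc n))).mul continuous_id)
        (by simp)).symm
    rw [h2]
    exact cfc_norm_le hp fun t ht => R6b ht (en_pos n)
  have hwz : ∀ z ∈ closure {y : A | ∃ c, y = p * c},
      Tendsto (fun n => g n * (p * g n) * z) atTop (𝓝 z) := by
    intro z hz
    rw [Metric.tendsto_atTop]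
    intro δ hδ
    obtain ⟨c, hc⟩ := hdense z hz (δ/3) (by positivity)
    obtain ⟨N, hN⟩ : ∃ N, 3 * en N * ‖c‖ < δ/3 := by
      have ht : Tendsto (fun n => 3 * en n * ‖c‖) atTop (𝓝 0) := by
        have := (en_tendsto.const_mul (3:ℝ)).mul_const ‖c‖
        simpa using this
      exact (ht.eventually_lt_const (by positivity)).exists
    refine ⟨N, fun n hn => ?_⟩
    have e1 : g n * (p * g n) * z - z
        = g n * (p * g n) * (z - p * c) + (g n * (p * g n) * p - p) * c + (p * c - z) := by
      noncomm_ring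
    have hek : 3 * en n * ‖c‖ ≤ 3 * en N * ‖c‖ := by
      have := en_antitone hn
      have hc0 := norm_nonneg c
      nlinarith
    rw [dist_eq_norm]
    calc ‖g n * (p * g n) * z - z‖
        ≤ ‖g n * (p * g n) * (z - p * c) + (g n * (p * g n) * p - p) * c‖ + ‖p * c - z‖ := by
          rw [e1]; exact norm_add_le _ _
      _ ≤ ‖g n * (p * g n) * (z - p * c)‖ + ‖(g n * (p * g n) * p - p) * c‖ + ‖p * c - z‖ := by
          have := norm_add_le (g n * (p * g n) * (z - p * c)) ((g n * (p * g n) * p - p) * c)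
          linarith
      _ ≤ ‖z - p * c‖ + ‖g n * (p * g n) * p - p‖ * ‖c‖ + ‖p * c - z‖ := by
          have h1 := hwnorm n (z - p * c)
          have h2 := norm_mul_le (g n * (p * g n) * p - p) c
          linarith
      _ ≤ ‖z - p * c‖ + 3 * en n * ‖c‖ + ‖z - p * c‖ := by
          have h3 := mul_le_mul_of_nonneg_right (hwp n) (norm_nonneg c)
          have h4 : ‖p * c - z‖ = ‖z - p * c‖ := norm_sub_rev _ _
          linarith
      _ < δ/3 + δ/3 + δ/3 := by linarith
      _ = δ := by ring
  -- inner products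
  have hgsa : ∀ n, star (g n) = g n := fun n => by rw [hg n]; exact cfc_sa _ _
  have hinner : ∀ y ∈ closure {y : A | ∃ c, y = p * c},
      ∀ z ∈ closure {y : A | ∃ c, y = p * c}, star (Φ y) * Φ z = star y * z := by
    intro y hy z hz
    have t1 : Tendsto (fun n => star (x * (g n * y)) * (x * (g n * z))) atTop
        (𝓝 (star (Φ y) * Φ z)) := ((hΦt y hy).star).mul (hΦt z hz)
    have heq : ∀ n, star (x * (g n * y)) * (x * (g n * z))
        = star y * (g n * (p * g n) * z) := by
      intro n
      have e1 : star (x * (g n * y)) * (x * (g n * z))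
          = star y * (g n * ((star x * x) * (g n * z))) := by
        rw [star_mul, star_mul, hgsa n]; noncomm_ring
      rw [e1, ← hpdef]
      noncomm_ring
    simp only [heq] at t1
    have t2 : Tendsto (fun n => star y * (g n * (p * g n) * z)) atTop (𝓝 (star y * z)) :=
      (hwz z hz).const_mul (star y)
    exact tendsto_nhds_unique t1 t2
  -- subgroup / isometry
  have hsubm : ∀ y ∈ closure {y : A | ∃ c, y = p * c}, ∀ z ∈ closure {y : A | ∃ c, y = p * c},
      y - z ∈ closure {y : A | ∃ c, y = p * c} := by
    intro y hy z hz
    refine mem_closure_sub₂ (fun u hu v hv => ?_) hy hz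
    obtain ⟨c, rfl⟩ := hu
    obtain ⟨c', rfl⟩ := hv
    exact ⟨c - c', (mul_sub p c c').symm⟩
  have hΦdiff : ∀ y ∈ closure {y : A | ∃ c, y = p * c},
      ∀ z ∈ closure {y : A | ∃ c, y = p * c}, Φ y - Φ z = Φ (y - z) := by
    intro y hy z hz
    have h := hadd (y - z) (hsubm y hy z hz) z hz
    rw [sub_add_cancel] at h
    rw [h]
    exact add_sub_cancel_right _ _
  have hΦnorm : ∀ y ∈ closure {y : A | ∃ c, y = p * c}, ‖Φ y‖ = ‖y‖ := by
    intro y hy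
    have h1 : ‖Φ y‖ * ‖Φ y‖ = ‖y‖ * ‖y‖ := by
      rw [← CStarRing.norm_star_mul_self, ← CStarRing.norm_star_mul_self, hinner y hy y hy]
    exact mul_self_inj (norm_nonneg _) (norm_nonneg _) |>.mp h1
  have hΦiso : ∀ y ∈ closure {y : A | ∃ c, y = p * c},
      ∀ z ∈ closure {y : A | ∃ c, y = p * c}, ‖Φ y - Φ z‖ = ‖y - z‖ := by
    intro y hy z hz
    rw [hΦdiff y hy z hz, hΦnorm _ (hsubm y hy z hz)]
  -- maps to
  have hmaps : ∀ y ∈ closure {y : A | ∃ c, y = p * c},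
      Φ y ∈ closure {y : A | ∃ c, y = x * c} := by
    intro y hy
    exact mem_closure_of_tendsto (hΦt y hy) (.of_forall fun n => ⟨g n * y, rfl⟩)
  -- surjectivity helper estimate
  have hsse : ∀ m (c : A), ‖x * (s * (g m * c)) - x * c‖ ≤ Real.sqrt (en m) * ‖c‖ := by
    intro m c
    have hssg : s * (s * g m)
        = cfcₙ (fun t => Real.sqrt t * (Real.sqrt t * (Real.sqrt t * (max t 0 + en m)⁻¹))) p := by
      rw [hsg m, hsdef]
      exact (cfc_mul' Real.continuous_sqrt Real.sqrt_zero
        (Real.continuous_sqrt.mul (Real.continuous_sqrt.mul (contD (en_pos m)))) (by simp) p).symm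
    have hdd : s * (s * g m) - s
        = cfcₙ (fun t => Real.sqrt t * (Real.sqrt t * (Real.sqrt t * (max t 0 + en m)⁻¹))
            - Real.sqrt t) p := by
      rw [hssg, hsdef]
      exact (cfcₙ_sub _ _ p
        (Real.continuous_sqrt.mul (Real.continuous_sqrt.mul
          (Real.continuous_sqrt.mul (contD (en_pos m))))).continuousOn (by simp)
        Real.continuous_sqrt.continuousOn Real.sqrt_zero).symm
    have hnn : ‖s * (s * g m) - s‖ ≤ Real.sqrt (en m) := by
      rw [hdd]
      exact cfc_norm_le hp fun t ht => R5 ht (en_pos m)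
    have e1 : x * (s * (g m * c)) - x * c = x * (s * (g m * c) - c) := by noncomm_ring
    have e2 : s * (s * (g m * c) - c) = (s * (s * g m) - s) * c := by noncomm_ring
    calc ‖x * (s * (g m * c)) - x * c‖ = ‖x * (s * (g m * c) - c)‖ := by rw [e1]
      _ = ‖s * (s * (g m * c) - c)‖ := hxnorm _
      _ = ‖(s * (s * g m) - s) * c‖ := by rw [e2]
      _ ≤ ‖s * (s * g m) - s‖ * ‖c‖ := norm_mul_le _ _
      _ ≤ Real.sqrt (en m) * ‖c‖ := mul_le_mul_of_nonneg_right hnn (norm_nonneg c)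
  -- surjectivity
  have hsurj : ∀ z ∈ closure {y : A | ∃ c, y = x * c},
      ∃ y ∈ closure {y : A | ∃ c, y = p * c}, Φ y = z := by
    intro z hz
    obtain ⟨u, hu, hulim⟩ := mem_closure_iff_seq_limit.mp hz
    choose cs hcs using hu
    have hpick : ∀ k : ℕ, ∃ m, Real.sqrt (en m) * ‖cs k‖ < en k := by
      intro k
      have ht : Tendsto (fun m => Real.sqrt (en m) * ‖cs k‖) atTop (𝓝 0) := by
        simpa using sqrt_en_tendsto.mul_const ‖cs k‖
      exact (ht.eventually_lt_const (en_pos k)).exists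
    choose ms hms using hpick
    have hymem : ∀ k, p * (g (ms k) * cs k) ∈ closure {y : A | ∃ c, y = p * c} := fun k =>
      subset_closure ⟨_, rfl⟩
    have hbd : ∀ k, ‖Φ (p * (g (ms k) * cs k)) - u k‖ ≤ en k := by
      intro k
      rw [hΦpc, hcs k]
      exact le_of_lt (lt_of_le_of_lt (hsse (ms k) (cs k)) (hms k))
    have hΦyt : Tendsto (fun k => Φ (p * (g (ms k) * cs k))) atTop (𝓝 z) := by
      rw [tendsto_iff_norm_sub_tendsto_zero]
      have hb : ∀ k, ‖Φ (p * (g (ms k) * cs k)) - z‖ ≤ en k + ‖u k - z‖ := by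
        intro k
        calc ‖Φ (p * (g (ms k) * cs k)) - z‖
            ≤ ‖Φ (p * (g (ms k) * cs k)) - u k‖ + ‖u k - z‖ := by
              have := norm_add_le (Φ (p * (g (ms k) * cs k)) - u k) (u k - z)
              simpa using this
          _ ≤ en k + ‖u k - z‖ := add_le_add (hbd k) le_rfl
      refine squeeze_zero (fun k => norm_nonneg _) hb ?_
      have h2 := tendsto_iff_norm_sub_tendsto_zero.mp hulim
      simpa using en_tendsto.add h2
    have hycauchy : CauchySeq (fun k => p * (g (ms k) * cs k)) := by
      have hΦc : CauchySeq (fun k => Φ (p * (g (ms k) * cs k))) := hΦyt.cauchySeq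
      rw [Metric.cauchySeq_iff] at hΦc ⊢
      intro δ hδ
      obtain ⟨N, hN⟩ := hΦc δ hδ
      refine ⟨N, fun m hm n hn => ?_⟩
      have := hN m hm n hn
      rwa [dist_eq_norm, hΦiso _ (hymem m) _ (hymem n), ← dist_eq_norm] at this
    obtain ⟨L, hL⟩ := cauchySeq_tendsto_of_complete hycauchy
    have hLmem : L ∈ closure {y : A | ∃ c, y = p * c} :=
      isClosed_closure.mem_of_tendsto hL (.of_forall hymem)
    have hΦLt : Tendsto (fun k => Φ (p * (g (ms k) * cs k))) atTop (𝓝 (Φ L)) := by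
      rw [tendsto_iff_norm_sub_tendsto_zero]
      have he : ∀ k, ‖Φ (p * (g (ms k) * cs k)) - Φ L‖ = ‖p * (g (ms k) * cs k) - L‖ := fun k =>
        hΦiso _ (hymem k) _ hLmem
      simp only [he]
      exact tendsto_iff_norm_sub_tendsto_zero.mp hL
    exact ⟨L, hLmem, tendsto_nhds_unique hΦLt hΦyt⟩
  -- injectivity
  have hinj : Set.InjOn Φ (closure {y : A | ∃ c, y = p * c}) := by
    intro y hy z hz h
    have h2 := hΦiso y hy z hz
    rw [h, sub_self, norm_zero] at h2
    exact sub_eq_zero.mp (norm_eq_zero.mp h2.symm)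
  exact ⟨Φ, ⟨hmaps, hinj, hsurj⟩, hadd, hmul, hinner⟩


variable {A : Type*} [NonUnitalCStarAlgebra A] [PartialOrder A] [StarOrderedRing A]

lemma backward {a b : A} (ha : 0 ≤ a) (hb : 0 ≤ b) (Φ : A → A)
    (hbij : Set.BijOn Φ (closure {y : A | ∃ c, y = a * c}) (closure {y : A | ∃ c, y = b * c}))
    (hadd : ∀ y ∈ closure {y : A | ∃ c, y = a * c}, ∀ z ∈ closure {y : A | ∃ c, y = a * c},
      Φ (y + z) = Φ y + Φ z)
    (hmul : ∀ y ∈ closure {y : A | ∃ c, y = a * c}, ∀ c : A, Φ (y * c) = Φ y * c)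
    (hinn : ∀ y ∈ closure {y : A | ∃ c, y = a * c}, ∀ z ∈ closure {y : A | ∃ c, y = a * c},
      star (Φ y) * Φ z = star y * z) :
    ∃ x : A,
      closure {y : A | ∃ c, y = a * c * a}
        = closure {y : A | ∃ c, y = (star x * x) * c * (star x * x)} ∧
      closure {y : A | ∃ c, y = b * c * b}
        = closure {y : A | ∃ c, y = (x * star x) * c * (x * star x)} := by
  have hsamem : cfcₙ Real.sqrt a ∈ closure {y : A | ∃ c, y = a * c} := sqrt_mem a ha
  have hsa2 : cfcₙ Real.sqrt a * cfcₙ Real.sqrt a = a := sqrt_cfc_mul_self ha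
  have hsastar : star (cfcₙ Real.sqrt a) = cfcₙ Real.sqrt a := cfc_sa _ _
  -- isometry of Φ on E_a
  have hsubm : ∀ y ∈ closure {y : A | ∃ c, y = a * c}, ∀ z ∈ closure {y : A | ∃ c, y = a * c},
      y - z ∈ closure {y : A | ∃ c, y = a * c} := by
    intro y hy z hz
    refine mem_closure_sub₂ (fun u hu v hv => ?_) hy hz
    obtain ⟨c, rfl⟩ := hu
    obtain ⟨c', rfl⟩ := hv
    exact ⟨c - c', (mul_sub a c c').symm⟩
  have hΦdiff : ∀ y ∈ closure {y : A | ∃ c, y = a * c},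
      ∀ z ∈ closure {y : A | ∃ c, y = a * c}, Φ y - Φ z = Φ (y - z) := by
    intro y hy z hz
    have h := hadd (y - z) (hsubm y hy z hz) z hz
    rw [sub_add_cancel] at h
    rw [h]
    exact add_sub_cancel_right _ _
  have hΦnorm : ∀ y ∈ closure {y : A | ∃ c, y = a * c}, ‖Φ y‖ = ‖y‖ := by
    intro y hy
    have h1 : ‖Φ y‖ * ‖Φ y‖ = ‖y‖ * ‖y‖ := by
      rw [← CStarRing.norm_star_mul_self, ← CStarRing.norm_star_mul_self, hinn y hy y hy]
    exact mul_self_inj (norm_nonneg _) (norm_nonneg _) |>.mp h1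
  have hΦiso : ∀ y ∈ closure {y : A | ∃ c, y = a * c},
      ∀ z ∈ closure {y : A | ∃ c, y = a * c}, ‖Φ y - Φ z‖ = ‖y - z‖ := by
    intro y hy z hz
    rw [hΦdiff y hy z hz, hΦnorm _ (hsubm y hy z hz)]
  refine ⟨Φ (cfcₙ Real.sqrt a), ?_, ?_⟩
  · have key : star (Φ (cfcₙ Real.sqrt a)) * Φ (cfcₙ Real.sqrt a) = a := by
      rw [hinn _ hsamem _ hsamem, hsastar, hsa2]
    rw [key]
  · have hrm : ∀ y ∈ closure {y : A | ∃ c, y = a * c}, ∀ c : A,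
        y * c ∈ closure {y : A | ∃ c, y = a * c} := by
      intro y hy c
      refine mem_closure_mul_right (S := {y : A | ∃ c, y = a * c}) (fun s hs => ?_) hy
      obtain ⟨d, rfl⟩ := hs
      exact ⟨d * c, by rw [mul_assoc]⟩
    have hclos : closure {y : A | ∃ c, y = Φ (cfcₙ Real.sqrt a) * c}
        = closure {y : A | ∃ c, y = b * c} := by
      apply subset_antisymm
      · apply closure_minimal ?_ isClosed_closure
        rintro y ⟨c, rfl⟩
        have h1 : Φ (cfcₙ Real.sqrt a) * c = Φ (cfcₙ Real.sqrt a * c) := (hmul _ hsamem c).symm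
        rw [h1]
        exact hbij.mapsTo (hrm _ hsamem c)
      · apply closure_minimal ?_ isClosed_closure
        rintro z ⟨c, rfl⟩
        obtain ⟨y, hy, hyz⟩ := hbij.surjOn (subset_closure ⟨c, rfl⟩)
        rw [← hyz]
        obtain ⟨u, hu, hulim⟩ := mem_closure_iff_seq_limit.mp hy
        choose cs hcs using hu
        have humem : ∀ k, u k ∈ closure {y : A | ∃ c, y = a * c} := fun k =>
          subset_closure ⟨cs k, hcs k⟩
        have hΦu : ∀ k, Φ (u k) = Φ (cfcₙ Real.sqrt a) * (cfcₙ Real.sqrt a * cs k) := by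
          intro k
          have hu' : u k = cfcₙ Real.sqrt a * (cfcₙ Real.sqrt a * cs k) := by
            rw [hcs k, ← mul_assoc, hsa2]
          rw [hu']
          exact hmul _ hsamem _
        have ht : Tendsto (fun k => Φ (u k)) atTop (𝓝 (Φ y)) := by
          rw [tendsto_iff_norm_sub_tendsto_zero]
          have he : ∀ k, ‖Φ (u k) - Φ y‖ = ‖u k - y‖ := fun k => hΦiso _ (humem k) _ hy
          simp only [he]
          exact tendsto_iff_norm_sub_tendsto_zero.mp hulim
        refine mem_closure_of_tendsto ht (.of_forall fun k => ?_)
        rw [hΦu k]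
        exact ⟨_, rfl⟩
    exact (herSub_eq_of_closure_eq hb hclos).symm

end BlackadarAux

/-- `a ∼ₛ b` iff the Hilbert modules `E_a` and `E_b` are isometrically
isomorphic. -/
theorem blackadarEquiv_iff_hilbertModule_iso [NonUnitalCStarAlgebra A] [PartialOrder A]
    [StarOrderedRing A] (a b : A) (ha : 0 ≤ a) (hb : 0 ≤ b) :
    BlackadarEquiv a b ↔
      ∃ Φ : A → A, Set.BijOn Φ (rightIdeal a) (rightIdeal b) ∧
        (∀ x ∈ rightIdeal a, ∀ y ∈ rightIdeal a, Φ (x + y) = Φ x + Φ y) ∧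
        (∀ x ∈ rightIdeal a, ∀ c : A, Φ (x * c) = Φ x * c) ∧
        (∀ x ∈ rightIdeal a, ∀ y ∈ rightIdeal a, star (Φ x) * Φ y = star x * y) := by
  constructor
  · rintro ⟨x, h1, h2⟩
    exact BlackadarAux.forward ha hb h1 h2
  · rintro ⟨Φ, hbij, hadd, hmul, hinn⟩
    exact BlackadarAux.backward ha hb Φ hbij hadd hmul hinn
end
end

section
/- Let A be a C*-algebra and let a, b be positive elements of A. Then a ≾_s b (i.e. there exists a positive element a' ∈ A_b with a ∼_s a') if and only if there exists x ∈ A such that E_a = E_{x*x} and E_{x x*} ⊆ E_b. -/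
open Filter Topology

noncomputable section

variable {A : Type*}

section lemmas
variable [NonUnitalCStarAlgebra A]

lemma herSub_subset_rightIdeal_s6 (b : A) : herSub b ⊆ rightIdeal b := by
  apply closure_minimal _ isClosed_closure
  rintro y ⟨x, rfl⟩
  exact subset_closure ⟨x * b, by rw [mul_assoc]⟩

lemma rightIdeal_mul {b y : A} (hy : y ∈ rightIdeal b) (c : A) : y * c ∈ rightIdeal b := by
  refine map_mem_closure (f := (· * c)) (t := {y : A | ∃ x : A, y = b * x})
    (continuous_mul_right c) hy ?_
  rintro z ⟨x, rfl⟩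
  exact ⟨x * c, by simp only [mul_assoc]⟩

lemma rightIdeal_subset {b c : A} (hc : c ∈ rightIdeal b) : rightIdeal c ⊆ rightIdeal b := by
  apply closure_minimal _ isClosed_closure
  rintro y ⟨x, rfl⟩
  exact rightIdeal_mul hc x

lemma herSub_mid {b u v : A} (hu : u ∈ herSub b) (hv : v ∈ herSub b) (x : A) :
    u * x * v ∈ herSub b := by
  refine map_mem_closure₂ (f := fun u v : A => u * x * v)
    (u := {y : A | ∃ x : A, y = b * x * b}) (by fun_prop) hu hv ?_
  rintro z ⟨p, rfl⟩ w ⟨q, rfl⟩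
  exact ⟨p * b * x * b * q, by simp only [mul_assoc]⟩

end lemmas

section ordered
variable [NonUnitalCStarAlgebra A] [PartialOrder A] [StarOrderedRing A]

lemma approx_unit_s6 [NonUnitalCStarAlgebra A] [PartialOrder A] [StarOrderedRing A]
    (b : A) (hb : 0 ≤ b) {ε : ℝ} (hε : 0 < ε) :
    ∃ w : A, b * w = w * b ∧ ‖b * w‖ ≤ 1 ∧ ‖b * w * b - b‖ ≤ Real.sqrt ε := by
  have hsa : IsSelfAdjoint b := .of_nonneg hb
  have hden : ∀ t : ℝ, t ^ 2 + ε ≠ 0 := fun t => by positivity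
  set g : ℝ → ℝ := fun t => t / (t ^ 2 + ε) with hgdef
  have hgc : Continuous g := Continuous.div continuous_id (by continuity) hden
  have hg0 : g 0 = 0 := by simp [hgdef]
  have h1 : b * cfcₙ g b = cfcₙ (fun t : ℝ => t * g t) b := by
    rw [cfcₙ_mul (fun t : ℝ => t) g b continuousOn_id rfl hgc.continuousOn hg0, cfcₙ_id' ℝ b]
  have h2 : cfcₙ g b * b = cfcₙ (fun t : ℝ => g t * t) b := by
    rw [cfcₙ_mul g (fun t : ℝ => t) b hgc.continuousOn hg0 continuousOn_id rfl, cfcₙ_id' ℝ b]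
  have hcomm : b * cfcₙ g b = cfcₙ g b * b := by
    rw [h1, h2]; exact cfcₙ_congr fun t _ => mul_comm _ _
  refine ⟨cfcₙ g b, hcomm, ?_, ?_⟩
  · rw [h1]
    apply norm_cfcₙ_le
    intro t _
    simp only [Real.norm_eq_abs, hgdef]
    have h5 : t * (t / (t ^ 2 + ε)) = t ^ 2 / (t ^ 2 + ε) := by ring
    rw [h5, abs_of_nonneg (by positivity), div_le_one (by positivity)]
    linarith [sq_nonneg t]
  · have h3 : b * cfcₙ g b * b = cfcₙ (fun t : ℝ => t * g t * t) b := by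
      rw [h1, cfcₙ_mul (fun t : ℝ => t * g t) (fun t : ℝ => t) b
        (by exact (continuous_id.mul hgc).continuousOn) (by simp [hg0])
        continuousOn_id rfl, cfcₙ_id' ℝ b]
    have h4 : cfcₙ (fun t : ℝ => t * g t * t - t) b = b * cfcₙ g b * b - b := by
      rw [cfcₙ_sub (fun t : ℝ => t * g t * t) (fun t : ℝ => t) b
        (by exact ((continuous_id.mul hgc).mul continuous_id).continuousOn) (by simp [hg0])
        continuousOn_id rfl, cfcₙ_id' ℝ b, ← h3]
    rw [← h4]
    apply norm_cfcₙ_le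
    intro t _
    simp only [Real.norm_eq_abs, hgdef]
    have hs : Real.sqrt ε ^ 2 = ε := Real.sq_sqrt hε.le
    have hs0 : 0 < Real.sqrt ε := Real.sqrt_pos.mpr hε
    have he : t * (t / (t ^ 2 + ε)) * t - t = -(ε * t) / (t ^ 2 + ε) := by
      field_simp
      ring
    rw [he, abs_div, abs_of_nonneg (by positivity : (0:ℝ) ≤ t ^ 2 + ε), div_le_iff₀ (by positivity)]
    rw [abs_neg, abs_mul, abs_of_nonneg hε.le]
    nlinarith [sq_nonneg (|t| - Real.sqrt ε), sq_abs t, abs_nonneg t]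

lemma approx_unit' (b : A) (hb : 0 ≤ b) {ε : ℝ} (hε : 0 < ε) :
    ∃ e w : A, e = b * w ∧ e = w * b ∧ ‖e‖ ≤ 1 ∧ ‖e * b - b‖ ≤ Real.sqrt ε ∧
      ‖b * e - b‖ ≤ Real.sqrt ε := by
  obtain ⟨w, hcomm, hn, happ⟩ := approx_unit_s6 b hb hε
  refine ⟨b * w, w, rfl, hcomm, hn, ?_, ?_⟩
  · exact happ
  · rw [hcomm, ← mul_assoc]
    exact happ

lemma mem_rightIdeal_self {b : A} (hb : 0 ≤ b) : b ∈ rightIdeal b := by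
  rw [rightIdeal, Metric.mem_closure_iff]
  intro δ hδ
  obtain ⟨w, hcomm, hn, happ⟩ := approx_unit_s6 b hb (ε := (δ / 2) ^ 2) (by positivity)
  refine ⟨b * (w * b), ⟨w * b, rfl⟩, ?_⟩
  rw [dist_eq_norm, ← mul_assoc, norm_sub_rev]
  calc ‖b * w * b - b‖ ≤ Real.sqrt ((δ / 2) ^ 2) := happ
  _ = δ / 2 := Real.sqrt_sq (by positivity)
  _ < δ := by linarith

lemma mem_herSub_of_rightIdeal {b y : A} (hb : 0 ≤ b) (hy : y ∈ rightIdeal b)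
    (hy' : star y ∈ rightIdeal b) : y ∈ herSub b := by
  have hbsa : star b = b := (IsSelfAdjoint.of_nonneg hb).star_eq
  rw [herSub, Metric.mem_closure_iff]
  intro δ hδ
  obtain ⟨z₁, ⟨u, rfl⟩, hz₁⟩ := Metric.mem_closure_iff.mp hy (δ / 6) (by positivity)
  obtain ⟨z₂, ⟨v, rfl⟩, hz₂⟩ := Metric.mem_closure_iff.mp hy' (δ / 6) (by positivity)
  rw [dist_eq_norm] at hz₁ hz₂
  set C : ℝ := ‖u‖ + ‖v‖ + 1 with hC
  have hC0 : 0 < C := by positivity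
  obtain ⟨e, w, he1, he2, hn, heb0, hbe0⟩ := approx_unit' b hb (ε := (δ / (6 * C)) ^ 2)
    (by positivity)
  have hsqrt : Real.sqrt ((δ / (6 * C)) ^ 2) = δ / (6 * C) := Real.sqrt_sq (by positivity)
  rw [hsqrt] at heb0 hbe0
  have hcomm : b * w = w * b := by rw [← he1, ← he2]
  have hmem : e * y * e = b * (w * y * w) * b := by
    rw [he1]
    simp only [mul_assoc]
    rw [hcomm]
  refine ⟨e * y * e, ⟨w * y * w, hmem⟩, ?_⟩
  rw [dist_eq_norm]
  have hbe : ‖b - b * e‖ ≤ δ / (6 * C) := by rw [norm_sub_rev]; exact hbe0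
  have heb : ‖b - e * b‖ ≤ δ / (6 * C) := by rw [norm_sub_rev]; exact heb0
  have huC : ‖u‖ ≤ C := by rw [hC]; linarith [norm_nonneg (v : A)]
  have hvC : ‖star v‖ ≤ C := by rw [norm_star, hC]; linarith [norm_nonneg (u : A)]
  have key1 : ‖y - e * y‖ < δ / 2 := by
    have t1 : ‖y - b * u‖ < δ / 6 := hz₁
    have t2 : ‖b * u - e * (b * u)‖ ≤ δ / 6 := by
      calc ‖b * u - e * (b * u)‖ = ‖(b - e * b) * u‖ := by rw [sub_mul, mul_assoc]
      _ ≤ ‖b - e * b‖ * ‖u‖ := norm_mul_le _ _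
      _ ≤ (δ / (6 * C)) * C := by
          apply mul_le_mul heb huC (norm_nonneg _) (by positivity)
      _ = δ / 6 := by field_simp
    have t3 : ‖e * (b * u) - e * y‖ ≤ δ / 6 := by
      calc ‖e * (b * u) - e * y‖ = ‖e * (b * u - y)‖ := by rw [mul_sub]
      _ ≤ ‖e‖ * ‖b * u - y‖ := norm_mul_le _ _
      _ ≤ 1 * ‖b * u - y‖ := mul_le_mul_of_nonneg_right hn (norm_nonneg _)
      _ ≤ δ / 6 := by rw [one_mul, norm_sub_rev]; linarith
    calc ‖y - e * y‖ ≤ ‖y - b * u‖ + ‖b * u - e * (b * u)‖ + ‖e * (b * u) - e * y‖ :=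
        norm_sub_le_norm_sub_add_norm_sub _ _ _ |>.trans (by
          exact add_le_add (norm_sub_le_norm_sub_add_norm_sub _ _ _) le_rfl)
    _ < δ / 6 + δ / 6 + δ / 6 := by linarith
    _ = δ / 2 := by ring
  have hyv : ‖y - star v * b‖ < δ / 6 := by
    have h9 : star (star y - b * v) = y - star v * b := by
      simp [star_sub, star_mul, hbsa]
    calc ‖y - star v * b‖ = ‖star (star y - b * v)‖ := by rw [h9]
    _ = ‖star y - b * v‖ := norm_star _
    _ < δ / 6 := hz₂
  have key2 : ‖y - y * e‖ < δ / 2 := by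
    have t2 : ‖star v * b - star v * b * e‖ ≤ δ / 6 := by
      calc ‖star v * b - star v * b * e‖ = ‖star v * (b - b * e)‖ := by
            rw [mul_sub, ← mul_assoc]
      _ ≤ ‖star v‖ * ‖b - b * e‖ := norm_mul_le _ _
      _ ≤ C * (δ / (6 * C)) := mul_le_mul hvC hbe (norm_nonneg _) hC0.le
      _ = δ / 6 := by field_simp
    have t3 : ‖star v * b * e - y * e‖ ≤ δ / 6 := by
      calc ‖star v * b * e - y * e‖ = ‖(star v * b - y) * e‖ := by rw [sub_mul]
      _ ≤ ‖star v * b - y‖ * ‖e‖ := norm_mul_le _ _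
      _ ≤ ‖star v * b - y‖ * 1 := mul_le_mul_of_nonneg_left hn (norm_nonneg _)
      _ ≤ δ / 6 := by rw [mul_one, norm_sub_rev]; linarith
    calc ‖y - y * e‖ ≤ ‖y - star v * b‖ + ‖star v * b - star v * b * e‖
          + ‖star v * b * e - y * e‖ :=
        norm_sub_le_norm_sub_add_norm_sub _ _ _ |>.trans (by
          exact add_le_add (norm_sub_le_norm_sub_add_norm_sub _ _ _) le_rfl)
    _ < δ / 6 + δ / 6 + δ / 6 := by linarith
    _ = δ / 2 := by ring
  calc ‖y - e * y * e‖ ≤ ‖y - e * y‖ + ‖e * y - e * y * e‖ :=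
      norm_sub_le_norm_sub_add_norm_sub _ _ _
  _ = ‖y - e * y‖ + ‖e * (y - y * e)‖ := by rw [mul_sub, ← mul_assoc]
  _ ≤ ‖y - e * y‖ + ‖e‖ * ‖y - y * e‖ := by linarith [norm_mul_le e (y - y * e)]
  _ ≤ ‖y - e * y‖ + 1 * ‖y - y * e‖ := by
      have := mul_le_mul_of_nonneg_right hn (norm_nonneg (y - y * e)); linarith
  _ < δ := by rw [one_mul]; linarith

lemma mem_herSub_self {b : A} (hb : 0 ≤ b) : b ∈ herSub b := by
  have h := mem_rightIdeal_self hb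
  exact mem_herSub_of_rightIdeal hb h (by rwa [(IsSelfAdjoint.of_nonneg hb).star_eq])

lemma herSub_subset_of_mem {b c : A} (hc : c ∈ herSub b) : herSub c ⊆ herSub b := by
  apply closure_minimal _ isClosed_closure
  rintro y ⟨x, rfl⟩
  exact herSub_mid hc hc x

lemma herSub_eq_of_rightIdeal_eq {c d : A} (hc : 0 ≤ c) (hd : 0 ≤ d)
    (h : rightIdeal c = rightIdeal d) : herSub c = herSub d := by
  have aux : ∀ c d : A, 0 ≤ c → 0 ≤ d → rightIdeal c = rightIdeal d → herSub c ⊆ herSub d := by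
    intro c d hc hd h
    have h1 : c ∈ rightIdeal d := h ▸ mem_rightIdeal_self hc
    have h2 : c ∈ herSub d := mem_herSub_of_rightIdeal hd h1
      (by rwa [(IsSelfAdjoint.of_nonneg hc).star_eq])
    exact herSub_subset_of_mem h2
  exact le_antisymm (aux c d hc hd h) (aux d c hd hc h.symm)

lemma rightIdeal_eq_of_herSub_eq {c d : A} (hc : 0 ≤ c) (hd : 0 ≤ d)
    (h : herSub c = herSub d) : rightIdeal c = rightIdeal d := by
  have aux : ∀ c d : A, 0 ≤ c → herSub c = herSub d → rightIdeal c ⊆ rightIdeal d := by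
    intro c d hc h
    have : c ∈ rightIdeal d := herSub_subset_rightIdeal_s6 d (h ▸ mem_herSub_self hc)
    exact rightIdeal_subset this
  exact le_antisymm (aux c d hc h) (aux d c hd h.symm)

end ordered

/-- `a ≾ₛ b` iff there is `x ∈ A` with `E_a = E_{x*x}` and `E_{xx*} ⊆ E_b`. -/
theorem blackadarLe_iff_rightIdeal [NonUnitalCStarAlgebra A] [PartialOrder A]
    [StarOrderedRing A] (a b : A) (ha : 0 ≤ a) (hb : 0 ≤ b) :
    BlackadarLe a b ↔
      ∃ x : A, rightIdeal a = rightIdeal (star x * x) ∧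
        rightIdeal (x * star x) ⊆ rightIdeal b := by
  constructor
  · rintro ⟨a', ha'pos, ha'mem, x, hA1, hA2⟩
    have hx1 : (0:A) ≤ star x * x := star_mul_self_nonneg x
    have hx2 : (0:A) ≤ x * star x := mul_star_self_nonneg x
    refine ⟨x, rightIdeal_eq_of_herSub_eq ha hx1 hA1, ?_⟩
    have h1 : rightIdeal (x * star x) = rightIdeal a' :=
      (rightIdeal_eq_of_herSub_eq ha'pos hx2 hA2).symm
    rw [h1]
    exact rightIdeal_subset (herSub_subset_rightIdeal_s6 b ha'mem)
  · rintro ⟨x, hE1, hE2⟩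
    have hx1 : (0:A) ≤ star x * x := star_mul_self_nonneg x
    have hx2 : (0:A) ≤ x * star x := mul_star_self_nonneg x
    refine ⟨x * star x, hx2, ?_, ⟨x, herSub_eq_of_rightIdeal_eq ha hx1 hE1, rfl⟩⟩
    have hmem : x * star x ∈ rightIdeal b := hE2 (mem_rightIdeal_self hx2)
    exact mem_herSub_of_rightIdeal hb hmem
      (by rwa [(IsSelfAdjoint.of_nonneg hx2).star_eq])
end
end

section
/- Let A be a C*-algebra, let a be a positive element of A, let e be a positive element of A_a, and let E' be a subset of A such that e x = x for all x ∈ E'. Then E' ⊆ E_{(e − 1/2)₊}, where (e − 1/2)₊ is the positive part of e − 1/2 defined by continuous functional calculus, i.e. (e − 1/2)₊ = f(e) with f(t) = max(t − 1/2, 0). -/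
open Filter Topology

noncomputable section

variable {A : Type*}

/-- if `e` is a positive element of `A_a` acting as the identity on `E'`,
then `E' ⊆ E_{(e - 1/2)₊}`. -/
theorem subset_rightIdeal_cut [NonUnitalCStarAlgebra A] [PartialOrder A] [StarOrderedRing A]
    (a : A) (ha : 0 ≤ a) (e : A) (he : 0 ≤ e) (heA : e ∈ herSub a)
    (E' : Set A) (hE' : ∀ x ∈ E', e * x = x) :
    E' ⊆ rightIdeal (cfcₙ (fun t : ℝ => max (t - 1 / 2) 0) e) := by
  intro x hx
  have hex : e * x = x := hE' x hx
  set k : ℝ → ℝ := fun t => min (t / (2 * (1 - min t (1/2)))) (1/2) with hkdef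
  have hden : ∀ t : ℝ, 2 * (1 - min t (1/2)) ≠ 0 := by
    intro t
    have : min t (1/2) ≤ 1/2 := min_le_right _ _
    nlinarith
  have hkc : Continuous k := by
    apply Continuous.min _ continuous_const
    exact Continuous.div continuous_id (by fun_prop) hden
  have hk0 : k 0 = 0 := by simp [hkdef]
  have key : (quasispectrum ℝ e).EqOn (fun t : ℝ => max (t - 1 / 2) 0)
      (fun t : ℝ => t/2 + (k t * t - k t)) := by
    intro t ht
    have ht0 : 0 ≤ t := quasispectrum_nonneg_of_nonneg e he t ht
    simp only [hkdef]
    rcases le_or_gt t (1/2) with h | h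
    · have hmin : min t (1/2) = t := min_eq_left h
      have hne : (2 : ℝ) * (1 - t) ≠ 0 := by nlinarith
      have hkt : min (t / (2 * (1 - min t (1/2)))) (1/2) = t / (2*(1-t)) := by
        rw [hmin]
        apply min_eq_left
        rw [div_le_iff₀ (by nlinarith)]
        nlinarith
      rw [hkt, max_eq_right (by linarith)]
      have h1t : (1 : ℝ) - t ≠ 0 := by linarith
      field_simp
      ring
    · have hmin : min t (1/2) = (1/2 : ℝ) := min_eq_right h.le
      have hkt : min (t / (2 * (1 - min t (1/2)))) (1/2) = (1/2 : ℝ) := by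
        rw [hmin]
        norm_num
        exact h.le
      rw [hkt, max_eq_left (by linarith)]
      ring
  have hsplit : cfcₙ (fun t : ℝ => max (t - 1 / 2) 0) e
      = (2⁻¹ : ℝ) • e + (cfcₙ k e * e - cfcₙ k e) := by
    rw [cfcₙ_congr key]
    rw [cfcₙ_add (fun t : ℝ => t/2) (fun t => k t * t - k t) e
      (by fun_prop) (by norm_num)
      (Continuous.continuousOn (by fun_prop)) (by simp [hk0])]
    rw [cfcₙ_sub (fun t : ℝ => k t * t) k e
      (Continuous.continuousOn (by fun_prop)) (by simp [hk0])
      hkc.continuousOn hk0]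
    rw [cfcₙ_mul k (fun t : ℝ => t) e hkc.continuousOn hk0 (by fun_prop) rfl]
    rw [cfcₙ_id' ℝ e he.isSelfAdjoint]
    congr 1
    have : (fun t : ℝ => t / 2) = fun t : ℝ => (2⁻¹ : ℝ) • t := by
      funext t; simp [div_eq_inv_mul, mul_comm]
    rw [this, cfcₙ_smul_id (2⁻¹ : ℝ) e he.isSelfAdjoint]
  have hcx : cfcₙ (fun t : ℝ => max (t - 1 / 2) 0) e * x = (2⁻¹ : ℝ) • x := by
    rw [hsplit]
    rw [add_mul, sub_mul, smul_mul_assoc, mul_assoc, hex]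
    simp
  apply subset_closure
  exact ⟨(2 : ℝ) • x, by rw [mul_smul_comm, hcx, smul_smul]; norm_num⟩
end
end

section
/- Let A be a C*-algebra, let a be a positive element of A, let e be a positive element of A_a, and let ε > 0. Then (e − ε)₊ ⊂⊂ a, i.e. there exists a positive element f ∈ A_a with f (e − ε)₊ = (e − ε)₊. -/
open Filter Topology

noncomputable section

variable {A : Type*}

lemma mul_mem_herSub [NonUnitalCStarAlgebra A] {a e : A} (he : e ∈ herSub a) (x : A) :
    e * x * e ∈ herSub a := by
  have hc : Continuous fun y : A => y * x * y := by fun_prop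
  refine map_mem_closure (f := fun y : A => y * x * y) hc he ?_
  rintro y ⟨z, rfl⟩
  exact ⟨z * a * x * a * z, by noncomm_ring⟩


/-- for positive `e ∈ A_a` and `ε > 0` one has `(e - ε)₊ ⊂⊂ a`. -/
theorem cut_cpctContained [NonUnitalCStarAlgebra A] [PartialOrder A] [StarOrderedRing A]
    (a : A) (ha : 0 ≤ a) (e : A) (he : 0 ≤ e) (heA : e ∈ herSub a) (ε : ℝ) (hε : 0 < ε) :
    ∃ f : A, 0 ≤ f ∧ f ∈ herSub a ∧
      f * cfcₙ (fun t : ℝ => max (t - ε) 0) e = cfcₙ (fun t : ℝ => max (t - ε) 0) e := by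
  set g : ℝ → ℝ := fun t => min (2 / ε * max (t - ε / 2) 0) 1 with hg_def
  set k : ℝ → ℝ := fun t => g t / t ^ 2 with hk_def
  have hgz : ∀ t ≤ ε / 2, g t = 0 := by
    intro t ht
    show min (2 / ε * max (t - ε / 2) 0) 1 = 0
    rw [max_eq_right (by linarith), mul_zero, min_eq_left (by norm_num)]
  have hg0 : g 0 = 0 := hgz 0 (by linarith)
  have hk0 : k 0 = 0 := by simp [hk_def, hg0]
  have hg1 : ∀ t, ε ≤ t → g t = 1 := by
    intro t ht
    have h1 : (1:ℝ) ≤ 2 / ε * (t - ε/2) := by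
      rw [div_mul_eq_mul_div, le_div_iff₀ hε]; linarith
    show min (2 / ε * max (t - ε / 2) 0) 1 = 1
    rw [max_eq_left (by linarith), min_eq_right h1]
  have hgcont : Continuous g := by fun_prop
  have hkcont : Continuous k := by
    rw [continuous_iff_continuousAt]
    intro t
    by_cases ht : t = 0
    · subst ht
      have hev : k =ᶠ[𝓝 (0:ℝ)] fun _ => 0 := by
        filter_upwards [Iio_mem_nhds (by positivity : (0:ℝ) < ε/2)] with s hs
        simp [hk_def, hgz s (le_of_lt hs)]
      exact ContinuousAt.congr continuousAt_const hev.symm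
    · exact hgcont.continuousAt.div ((continuous_pow 2).continuousAt) (pow_ne_zero 2 ht)
  have hgk : ∀ t : ℝ, g t = t * (k t * t) := by
    intro t
    by_cases ht : t = 0
    · subst ht; simp [hg0]
    · show g t = t * (g t / t ^ 2 * t)
      field_simp
  have hsa : IsSelfAdjoint e := .of_nonneg he
  refine ⟨cfcₙ g e, ?_, ?_, ?_⟩
  · exact cfcₙ_nonneg fun x _ => by positivity
  · have h1 : cfcₙ g e = e * (cfcₙ k e * e) := by
      calc cfcₙ g e = cfcₙ (fun t : ℝ => t * (k t * t)) e := cfcₙ_congr fun t _ => hgk t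
        _ = cfcₙ (fun t : ℝ => t) e * cfcₙ (fun t : ℝ => k t * t) e := by
            rw [cfcₙ_mul _ _ e (by fun_prop) (by simp) (by fun_prop) (by simp [hk0])]
        _ = e * (cfcₙ k e * e) := by
            rw [cfcₙ_mul _ _ e (by fun_prop) (by simp [hk0]) (by fun_prop) (by simp),
              cfcₙ_id' ℝ e hsa]
    rw [h1, ← mul_assoc]
    exact mul_mem_herSub heA _
  · rw [← cfcₙ_mul _ _ e (by fun_prop) (by simp [hg0]) (by fun_prop) (by simp [hε.le])]
    refine cfcₙ_congr fun t _ => ?_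
    by_cases ht : ε ≤ t
    · simp [hg1 t ht]
    · have hmax : max (t - ε) 0 = 0 := max_eq_right (by linarith)
      simp [hmax]
end
end

section
/- Let A be a C*-algebra and let a', a be positive elements of A with a' ⊂⊂ a. Then there exists a positive element a'' ∈ A with a' ⊂⊂ a'' and a'' ⊂⊂ a. -/
open Filter Topology

noncomputable section

variable {A : Type*}

/-- The hereditary subalgebra absorbs sandwiching by its elements. -/
lemma herSub_sandwich [NonUnitalCStarAlgebra A] {a s t : A}
    (hs : s ∈ herSub a) (ht : t ∈ herSub a) (y : A) : s * y * t ∈ herSub a := by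
  refine map_mem_closure₂ (f := fun u v => u * y * v) (by fun_prop) hs ht ?_
  rintro u ⟨x, rfl⟩ v ⟨x', rfl⟩
  exact ⟨x * a * y * a * x', by noncomm_ring⟩

namespace CpctInterpAux

/-- cut-off function: `0` for `c*t ≤ d`, `1` for `c*t ≥ d + 1`, linear in between. -/
def cut (c d : ℝ) : ℝ → ℝ := fun t => min (max (c * t - d) 0) 1

lemma cut_cont (c d : ℝ) : Continuous (cut c d) := by unfold cut; fun_prop

lemma cut_zero (c d : ℝ) (hd : 0 ≤ d) : cut c d 0 = 0 := by
  simp [cut, max_eq_right, hd, neg_nonpos.mpr hd]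

lemma cut_nonneg (c d t : ℝ) : 0 ≤ cut c d t :=
  le_min (le_max_right _ _) zero_le_one

lemma cut_le_one (c d t : ℝ) : cut c d t ≤ 1 := min_le_right _ _

lemma cut_eq_zero {c d t : ℝ} (h : c * t ≤ d) : cut c d t = 0 := by
  simp [cut, max_eq_right (by linarith : c * t - d ≤ 0)]

lemma cut_eq_one {c d t : ℝ} (h : d + 1 ≤ c * t) : cut c d t = 1 := by
  have h1 : (1 : ℝ) ≤ c * t - d := by linarith
  rw [cut, max_eq_left (by linarith : (0:ℝ) ≤ c * t - d), min_eq_right h1]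

/-- the `f` function: `0` on `(-∞, 2/3]`, `1` on `[5/6, ∞)`. -/
def ff : ℝ → ℝ := cut 6 4

/-- the `φ` function: `0` on `(-∞, 5/6]`, `1` on `[11/12, ∞)`. -/
def pp : ℝ → ℝ := cut 12 10

/-- the `s` function: continuous, `s 0 = 0`, and `t ^ 2 * s t = 1` for `t ≥ 2/3`. -/
def ss : ℝ → ℝ := fun t => min ((27 / 8) * t) ((max t (2 / 3)) ^ 2)⁻¹

lemma ss_cont : Continuous ss := by
  apply Continuous.min (by fun_prop)
  exact (Continuous.pow (continuous_id.max continuous_const) 2).inv₀ fun t =>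
    (pow_pos (lt_of_lt_of_le (by norm_num) (le_max_right t (2/3))) 2).ne'

lemma ss_zero : ss 0 = 0 := by
  rw [ss]
  norm_num

lemma ss_nonneg {t : ℝ} (ht : 0 ≤ t) : 0 ≤ ss t := by
  refine le_min (by positivity) (by positivity)

lemma ss_spec {t : ℝ} (ht : 2 / 3 ≤ t) : t * ss t * t = 1 := by
  have ht0 : 0 < t := lt_of_lt_of_le (by norm_num) ht
  have hmax : max t (2/3 : ℝ) = t := max_eq_left ht
  have h1 : ((max t (2/3 : ℝ)) ^ 2)⁻¹ ≤ (27 / 8) * t := by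
    rw [hmax, inv_le_iff_one_le_mul₀ (by positivity)]
    nlinarith
  rw [ss]
  rw [min_eq_right h1, hmax]
  field_simp

/-- pointwise identity: `(t * s t * t) * f t = f t`. -/
lemma ss_ff (t : ℝ) : (t * ss t * t) * ff t = ff t := by
  rcases le_or_gt t (2/3) with h | h
  · rw [ff, cut_eq_zero (by linarith), mul_zero]
  · rw [ss_spec h.le, one_mul]

/-- pointwise identity: `f t * (φ t * f t) = φ t`. -/
lemma ff_pp (t : ℝ) : ff t * (pp t * ff t) = pp t := by
  rcases le_or_gt t (5/6) with h | h
  · rw [pp, cut_eq_zero (by linarith), zero_mul, mul_zero]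
  · rw [ff, cut_eq_one (by linarith), one_mul, mul_one]

end CpctInterpAux

open CpctInterpAux in
/-- compact containment interpolates: `a' ⊂⊂ a` gives `a'' ` with
`a' ⊂⊂ a'' ⊂⊂ a`. -/
theorem cpctContained_interpolation [NonUnitalCStarAlgebra A] [PartialOrder A]
    [StarOrderedRing A] (a' a : A) (ha' : 0 ≤ a') (ha : 0 ≤ a) (h : CpctContained a' a) :
    ∃ a'' : A, 0 ≤ a'' ∧ CpctContained a' a'' ∧ CpctContained a'' a := by
  obtain ⟨e, he0, heA, hea⟩ := h
  have hesa : IsSelfAdjoint e := .of_nonneg he0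
  have hσ : ∀ x ∈ quasispectrum ℝ e, 0 ≤ x := quasispectrum_nonneg_of_nonneg e he0
  -- continuity facts
  have hffc : ContinuousOn ff (quasispectrum ℝ e) := (cut_cont 6 4).continuousOn
  have hff0 : ff 0 = 0 := cut_zero 6 4 (by norm_num)
  have hppc : ContinuousOn pp (quasispectrum ℝ e) := (cut_cont 12 10).continuousOn
  have hpp0 : pp 0 = 0 := cut_zero 12 10 (by norm_num)
  have hssc : ContinuousOn ss (quasispectrum ℝ e) := ss_cont.continuousOn
  -- the three elements
  set a'' := cfcₙ ff e with ha''_def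
  set k := cfcₙ pp e with hk_def
  set w := cfcₙ ss e with hw_def
  have ha''0 : 0 ≤ a'' := cfcₙ_nonneg fun x _ => cut_nonneg 6 4 x
  have hk0 : 0 ≤ k := cfcₙ_nonneg fun x _ => cut_nonneg 12 10 x
  -- "powers" of e (A is non-unital, so use cfcₙ) absorb a'
  set q : ℕ → A := fun n => cfcₙ (fun t : ℝ => t ^ (n + 1)) e with hq_def
  have hqsucc : ∀ n : ℕ, q (n + 1) = q n * e := by
    intro n
    have := cfcₙ_mul (fun t : ℝ => t ^ (n + 1)) (fun t : ℝ => t) e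
      (by fun_prop) (by simp) (by fun_prop) rfl
    simp only [← pow_succ] at this
    rw [hq_def]
    simp only [this, cfcₙ_id' ℝ e]
  have hpow : ∀ n : ℕ, q n * a' = a' := by
    intro n
    induction n with
    | zero =>
      have : q 0 = e := by simpa [hq_def] using cfcₙ_id' ℝ e
      rw [this, hea]
    | succ n ih => rw [hqsucc, mul_assoc, hea, ih]
  -- key limit argument: k * a' = a'
  have hka' : k * a' = a' := by
    have key : ∀ n : ℕ, ‖k * a' - a'‖ ≤ (11 / 12 : ℝ) ^ (n + 1) * ‖a'‖ := by
      intro n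
      have h1 : cfcₙ (fun t : ℝ => pp t * t ^ (n + 1)) e = k * q n := by
        rw [cfcₙ_mul pp (fun t : ℝ => t ^ (n + 1)) e hppc hpp0 (by fun_prop) (by simp)]
      have h2 : cfcₙ (fun t : ℝ => pp t * t ^ (n + 1) - t ^ (n + 1)) e
          = k * q n - q n := by
        rw [cfcₙ_sub (fun t : ℝ => pp t * t ^ (n + 1)) (fun t : ℝ => t ^ (n + 1)) e
          (by exact hppc.mul (by fun_prop)) (by simp [hpp0]) (by fun_prop) (by simp),
          h1]
      have h3 : k * a' - a' = cfcₙ (fun t : ℝ => pp t * t ^ (n + 1) - t ^ (n + 1)) e * a' := by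
        rw [h2, sub_mul, mul_assoc, hpow n]
      rw [h3]
      calc ‖cfcₙ (fun t : ℝ => pp t * t ^ (n + 1) - t ^ (n + 1)) e * a'‖
          ≤ ‖cfcₙ (fun t : ℝ => pp t * t ^ (n + 1) - t ^ (n + 1)) e‖ * ‖a'‖ := norm_mul_le _ _
        _ ≤ (11 / 12 : ℝ) ^ (n + 1) * ‖a'‖ := by
            refine mul_le_mul_of_nonneg_right (norm_cfcₙ_le fun x hx => ?_) (norm_nonneg _)
            have hx0 : 0 ≤ x := hσ x hx
            rcases le_or_gt (11 / 12 : ℝ) x with hx1 | hx1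
            · rw [pp, cut_eq_one (by linarith)]
              simp [pow_nonneg, le_of_lt, pow_pos]
              positivity
            · have habs : |pp x * x ^ (n + 1) - x ^ (n + 1)| ≤ x ^ (n + 1) := by
                rw [abs_le]
                have h01 : 0 ≤ pp x := cut_nonneg 12 10 x
                have h02 : pp x ≤ 1 := cut_le_one 12 10 x
                have hp0 : 0 ≤ x ^ (n + 1) := pow_nonneg hx0 _
                constructor <;> nlinarith [mul_le_of_le_one_left hp0 h02,
                  mul_nonneg h01 hp0]
              calc ‖pp x * x ^ (n + 1) - x ^ (n + 1)‖ ≤ x ^ (n + 1) := habs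
                _ ≤ (11 / 12 : ℝ) ^ (n + 1) := pow_le_pow_left₀ hx0 hx1.le _
    have htend : Tendsto (fun n : ℕ => (11 / 12 : ℝ) ^ (n + 1) * ‖a'‖) atTop (𝓝 0) := by
      have h0 : Tendsto (fun n : ℕ => (11 / 12 : ℝ) ^ n) atTop (𝓝 0) :=
        tendsto_pow_atTop_nhds_zero_of_lt_one (by norm_num) (by norm_num)
      have := (h0.comp (tendsto_add_atTop_nat 1)).mul_const ‖a'‖
      simpa using this
    have hle : ‖k * a' - a'‖ ≤ 0 := ge_of_tendsto' htend key
    have : k * a' - a' = 0 := by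
      rw [← norm_le_zero_iff]; exact hle
    exact sub_eq_zero.mp this
  -- k ∈ herSub a''
  have hkmem : k ∈ herSub a'' := by
    have hmul : a'' * (k * a'') = k := by
      rw [ha''_def, hk_def,
        ← cfcₙ_mul pp ff e hppc hpp0 hffc hff0,
        ← cfcₙ_mul ff (fun t => pp t * ff t) e hffc hff0 (hppc.mul hffc) (by simp [hpp0])]
      exact cfcₙ_congr fun x _ => ff_pp x
    exact subset_closure ⟨k, by rw [mul_assoc]; exact hmul.symm⟩
  -- the witness for a'' ⊂⊂ a
  have hw1 : cfcₙ (fun t : ℝ => t * ss t * t) e = e * w * e := by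
    rw [cfcₙ_mul (fun t : ℝ => t * ss t) (fun t : ℝ => t) e
        (by exact (continuousOn_id.mul hssc)) (by simp [ss_zero]) (by fun_prop) rfl,
      cfcₙ_mul (fun t : ℝ => t) ss e (by fun_prop) rfl hssc ss_zero,
      cfcₙ_id' ℝ e]
  have hh0 : 0 ≤ e * w * e := by
    rw [← hw1]
    exact cfcₙ_nonneg fun x hx => by
      have := hσ x hx
      have := ss_nonneg this
      positivity
  have hhmem : e * w * e ∈ herSub a := herSub_sandwich heA heA w
  have hha'' : (e * w * e) * a'' = a'' := by
    rw [← hw1, ha''_def,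
      ← cfcₙ_mul (fun t : ℝ => t * ss t * t) ff e
        (by exact ((continuousOn_id.mul hssc).mul continuousOn_id)) (by simp [ss_zero])
        hffc hff0]
    exact cfcₙ_congr fun x _ => ss_ff x
  exact ⟨a'', ha''0, ⟨k, hk0, hkmem, hka'⟩, ⟨e * w * e, hh0, hhmem, hha''⟩⟩
end
end
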